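/- arXiv:2602.09863 — 4 statements merged into one kernel-verified Lean document; each statement's English description precedes it below -/
import Mathlib

section
/- As n → ∞, both ω⃗(A_n) → ∞ and ω⃗(D_n) → ∞; that is, for every k there exists N such that for all n ≥ N we have ω⃗(A_n) ≥ k and ω⃗(D_n) ≥ k. -/
/-- A tournament on a vertex type `V`: an orientation of the complete graph. -/
structure Tournament (V : Type) where
  arc : V → V → Prop
  loopless : ∀ v, ¬ arc v v
  anti : ∀ u v, u ≠ v → (arc u v ↔ ¬ arc v u)

namespace Tournament

variable {V W : Type}

/-- The backedge graph of `T` with respect to the total ordering of `V` induced by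
an injective map `f : V → ℕ`: `u` and `v` are adjacent iff the arc between them
goes backwards in the ordering. -/
def backedge (T : Tournament V) (f : V → ℕ) : SimpleGraph V where
  Adj u v := (f u < f v ∧ T.arc v u) ∨ (f v < f u ∧ T.arc u v)
  symm := ⟨fun u v h => h.symm⟩
  loopless := ⟨by
    intro v h
    rcases h with ⟨h, _⟩ | ⟨h, _⟩ <;> exact lt_irrefl _ h⟩

/-- The clique number of a tournament: the minimum over all orderings of the
clique number of the corresponding backedge graph. -/
noncomputable def cliqueNum (T : Tournament V) : ℕ :=
  sInf {n | ∃ f : V → ℕ, Function.Injective f ∧ (T.backedge f).cliqueNum = n}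

/-- The subtournament induced on a set `X` of vertices. -/
def restrict (T : Tournament V) (X : Set V) : Tournament X where
  arc u v := T.arc u.1 v.1
  loopless v := T.loopless v.1
  anti u v h := T.anti u.1 v.1 (fun e => h (Subtype.ext e))

/-- `ω⃗(X)`: the clique number of the subtournament induced on `X`. -/
noncomputable def cliqueNumOn (T : Tournament V) (X : Set V) : ℕ :=
  (T.restrict X).cliqueNum

/-- Out-neighbourhood. -/
def outN (T : Tournament V) (v : V) : Set V := {w | T.arc v w}

/-- In-neighbourhood. -/
def inN (T : Tournament V) (v : V) : Set V := {w | T.arc w v}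

/-- `T.HasCopy H`: some set of vertices of `T` induces a subtournament isomorphic to `H`. -/
def HasCopy (T : Tournament V) (H : Tournament W) : Prop :=
  ∃ f : W → V, Function.Injective f ∧ ∀ u v : W, H.arc u v ↔ T.arc (f u) (f v)

end Tournament

/-- Vertex type of the tournament `D n` (`D 0` is empty, `D 1` a single vertex). -/
def DType : ℕ → Type
  | 0 => Empty
  | n+1 => (DType n) ⊕ ((DType n) ⊕ Unit)

/-- Arcs of `D n`: `D (n+1) = Δ(X, Y, v)` with `X ⇒ Y`, `Y ⇒ v`, `v ⇒ X`,
where `X`, `Y` are copies of `D n` and `v` one extra vertex. -/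
def Darc : (n : ℕ) → DType n → DType n → Prop
  | 0, x, _ => x.elim
  | n+1, Sum.inl a, Sum.inl b => Darc n a b
  | _+1, Sum.inl _, Sum.inr (Sum.inl _) => True
  | _+1, Sum.inl _, Sum.inr (Sum.inr _) => False
  | _+1, Sum.inr (Sum.inl _), Sum.inl _ => False
  | n+1, Sum.inr (Sum.inl a), Sum.inr (Sum.inl b) => Darc n a b
  | _+1, Sum.inr (Sum.inl _), Sum.inr (Sum.inr _) => True
  | _+1, Sum.inr (Sum.inr _), Sum.inl _ => True
  | _+1, Sum.inr (Sum.inr _), Sum.inr _ => False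

theorem Darc_irrefl (n : ℕ) : ∀ x : DType n, ¬ Darc n x x := by
  induction n with
  | zero => intro x; exact x.elim
  | succ n ih =>
    intro x
    match x with
    | Sum.inl a => simpa [Darc] using ih a
    | Sum.inr (Sum.inl a) => simpa [Darc] using ih a
    | Sum.inr (Sum.inr u) => simp [Darc]

theorem Darc_anti (n : ℕ) : ∀ x y : DType n, x ≠ y → (Darc n x y ↔ ¬ Darc n y x) := by
  induction n with
  | zero => intro x; exact x.elim
  | succ n ih =>
    intro x y hxy
    match x, y with
    | Sum.inl a, Sum.inl b =>
      have hab : a ≠ b := by intro h; exact hxy (by rw [h])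
      simpa [Darc] using ih a b hab
    | Sum.inl a, Sum.inr (Sum.inl b) => simp [Darc]
    | Sum.inl a, Sum.inr (Sum.inr u) => simp [Darc]
    | Sum.inr (Sum.inl a), Sum.inl b => simp [Darc]
    | Sum.inr (Sum.inl a), Sum.inr (Sum.inl b) =>
      have hab : a ≠ b := by intro h; exact hxy (by rw [h])
      simpa [Darc] using ih a b hab
    | Sum.inr (Sum.inl a), Sum.inr (Sum.inr u) => simp [Darc]
    | Sum.inr (Sum.inr u), Sum.inl b => simp [Darc]
    | Sum.inr (Sum.inr u), Sum.inr (Sum.inl b) => simp [Darc]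
    | Sum.inr (Sum.inr u), Sum.inr (Sum.inr w) =>
      exact absurd (by cases u; cases w; rfl) hxy

/-- The tournament `D n` (indexed so that `D 1` is a single vertex, and
`D (n+1)` is `Δ(D n, D n, v)`). -/
def Dtour (n : ℕ) : Tournament (DType n) where
  arc := Darc n
  loopless := Darc_irrefl n
  anti := Darc_anti n

/-- Vertex type of the tournament `A n` (`A 0` is empty, `A 1` a single vertex):
`A (n+1)` consists of `n` copies of `A n` together with `n+1` extra vertices. -/
def AType : ℕ → Type
  | 0 => Empty
  | n+1 => (Fin n × AType n) ⊕ Fin (n+1)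

/-- Arcs of `A (n+1)` (0-indexed version of the definition of Kim and Kim):
`inl (i, a)` is the vertex `a` of the copy `T_i` of `A n`, and `inr i` is the
extra vertex `v_i`.  We have `v_j ⇒ v_i` for `i < j`; `T_i ⇒ T_j` for `i < j`;
`v_i ⇒ T_j` for `i ≤ j`; and `T_j ⇒ v_i` for `j < i`. -/
def Aarc : (n : ℕ) → AType n → AType n → Prop
  | 0, x, _ => x.elim
  | n+1, Sum.inl (i, a), Sum.inl (j, b) => (i : ℕ) < (j : ℕ) ∨ (i = j ∧ Aarc n a b)
  | _+1, Sum.inl (j, _), Sum.inr i => (j : ℕ) < (i : ℕ)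
  | _+1, Sum.inr i, Sum.inl (j, _) => (i : ℕ) ≤ (j : ℕ)
  | _+1, Sum.inr i, Sum.inr j => (j : ℕ) < (i : ℕ)

theorem Aarc_irrefl (n : ℕ) : ∀ x : AType n, ¬ Aarc n x x := by
  induction n with
  | zero => intro x; exact x.elim
  | succ n ih =>
    intro x
    match x with
    | Sum.inl (i, a) =>
      simp only [Aarc, lt_irrefl, false_or, not_and]
      intro _
      exact ih a
    | Sum.inr i => simp [Aarc]

theorem Aarc_anti (n : ℕ) : ∀ x y : AType n, x ≠ y → (Aarc n x y ↔ ¬ Aarc n y x) := by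
  induction n with
  | zero => intro x; exact x.elim
  | succ n ih =>
    intro x y hxy
    match x, y with
    | Sum.inl (i, a), Sum.inl (j, b) =>
      rcases lt_trichotomy (i : ℕ) (j : ℕ) with h | h | h
      · have hne : j ≠ i := by intro e; rw [e] at h; exact lt_irrefl _ h
        simp only [Aarc]
        constructor
        · intro _ hc
          rcases hc with hc | ⟨hc, _⟩
          · omega
          · exact hne hc
        · intro _; exact Or.inl h
      · have hij : i = j := Fin.ext h
        subst hij
        have hab : a ≠ b := by
          intro e; exact hxy (by rw [e])
        simpa [Aarc] using ih a b hab
      · have hne : i ≠ j := by intro e; rw [e] at h; exact lt_irrefl _ h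
        simp only [Aarc]
        constructor
        · intro hc _
          rcases hc with hc | ⟨hc, _⟩
          · omega
          · exact hne hc
        · intro hc
          exfalso
          exact hc (Or.inl h)
    | Sum.inl (j, a), Sum.inr i => simp only [Aarc]; omega
    | Sum.inr i, Sum.inl (j, a) => simp only [Aarc]; omega
    | Sum.inr i, Sum.inr j =>
      have hne : (i : ℕ) ≠ (j : ℕ) := fun e => hxy (by rw [Fin.ext e])
      simp only [Aarc]
      omega

/-- The tournament `A n` of Kim and Kim (indexed so that `A 1` is a single vertex). -/
def Atour (n : ℕ) : Tournament (AType n) where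
  arc := Aarc n
  loopless := Aarc_irrefl n
  anti := Aarc_anti n
namespace Tournament

variable {V : Type}

/-- `M` contains a set `K` of `s` vertices such that every arc of `T[K]` is heavy,
as witnessed by a mountain (in the sense of the predicate `mtn`) inside `M`. -/
def HasHeavyClique (T : Tournament V) (mtn : Set V → Prop) (s : ℕ) (M : Set V) : Prop :=
  ∃ K ⊆ M, K.ncard = s ∧ ∀ u ∈ K, ∀ v ∈ K, T.arc u v →
    ∃ M' ⊆ M, mtn M' ∧ (∀ m ∈ M', T.arc m u) ∧ (∀ m ∈ M', T.arc v m)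

/-- `M` is minimal subject to containing an `(r,s)`-clique (heaviness being
witnessed by `r`-mountains, given by the predicate `mtn`, inside `M`). -/
def IsRSMtnAux (T : Tournament V) (mtn : Set V → Prop) (s : ℕ) (M : Set V) : Prop :=
  T.HasHeavyClique mtn s M ∧ ∀ M' ⊆ M, T.HasHeavyClique mtn s M' → M' = M

/-- `T.IsMtn r M`: the set `M` induces an `r`-mountain.  A `1`-mountain is a single
vertex, and an `(r+1)`-mountain (for `r ≥ 1`) is an `(r, r+1)`-mountain, i.e. a minimal
set containing `r+1` vertices all of whose arcs are `r`-heavy within the set. -/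
def IsMtn (T : Tournament V) : ℕ → Set V → Prop
  | 0 => fun _ => False
  | 1 => fun M => ∃ v, M = {v}
  | (r+2) => T.IsRSMtnAux (T.IsMtn (r+1)) (r+2)

/-- `T.IsRSMtn r s M`: the set `M` induces an `(r,s)`-mountain, i.e. a minimal set
containing an `(r,s)`-clique (with heaviness witnessed by `r`-mountains inside the set). -/
def IsRSMtn (T : Tournament V) (r s : ℕ) (M : Set V) : Prop :=
  T.IsRSMtnAux (T.IsMtn r) s M

/-- A `(c,a)`-ω⃗-bag-chain: pairwise disjoint bags of clique number exactly `c`,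
with all "wrong direction" neighbourhoods between bags of clique number less than `a`. -/
def IsBagChain (T : Tournament V) (c a : ℕ) {t : ℕ} (B : Fin t → Set V) : Prop :=
  (∀ i j : Fin t, i ≠ j → Disjoint (B i) (B j)) ∧
  (∀ i, T.cliqueNumOn (B i) = c) ∧
  (∀ i j : Fin t, i < j →
    (∀ v ∈ B j, T.cliqueNumOn (T.outN v ∩ B i) < a) ∧
    (∀ w ∈ B i, T.cliqueNumOn (T.inN w ∩ B j) < a))

/-- A `(c,a)`-near-bag-chain: pairwise disjoint bags of clique number at most `c`,
such that for every vertex the "wrong direction" neighbours in the union of the other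
bags have clique number at most `a`. -/
def IsNearBagChain (T : Tournament V) (c a : ℕ) {t : ℕ} (Q : Fin t → Set V) : Prop :=
  (∀ i j : Fin t, i ≠ j → Disjoint (Q i) (Q j)) ∧
  (∀ i, T.cliqueNumOn (Q i) ≤ c) ∧
  (∀ i : Fin t, ∀ v ∈ Q i,
    T.cliqueNumOn (T.inN v ∩ ⋃ j, ⋃ (_ : i < j), Q j) ≤ a ∧
    T.cliqueNumOn (T.outN v ∩ ⋃ j, ⋃ (_ : j < i), Q j) ≤ a)

end Tournament

/-- The Ramsey number `R(x,y)`: the least `N` such that every graph on `N` vertices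
contains a clique of size `x` or an independent set of size `y` (equivalently, every
red/blue colouring of the edges of `K_N` contains a red `K_x` or a blue `K_y`). -/
noncomputable def ramseyNumber (x y : ℕ) : ℕ :=
  sInf {N | ∀ G : SimpleGraph (Fin N),
    (∃ s, G.IsNClique x s) ∨ (∃ s, Gᶜ.IsNClique y s)}

section AuxProofs

open Finset

instance instFintypeD : ∀ n, Fintype (DType n)
  | 0 => inferInstanceAs (Fintype Empty)
  | n+1 => letI := instFintypeD n; inferInstanceAs (Fintype (_ ⊕ (_ ⊕ Unit)))

instance instFintypeA : ∀ n, Fintype (AType n)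
  | 0 => inferInstanceAs (Fintype Empty)
  | n+1 => letI := instFintypeA n; inferInstanceAs (Fintype ((Fin n × _) ⊕ Fin (n+1)))

/-- Pairwise backedge-adjacency on a finset. -/
def BKClique {V : Type} (T : Tournament V) (f : V → ℕ) (K : Finset V) : Prop :=
  ∀ u ∈ K, ∀ z ∈ K, u ≠ z → (T.backedge f).Adj u z

lemma bk_empty {V : Type} (T : Tournament V) (f : V → ℕ) : BKClique T f ∅ := by
  intro u hu; exact absurd hu (Finset.notMem_empty u)

lemma bk_singleton {V : Type} (T : Tournament V) (f : V → ℕ) (v : V) : BKClique T f {v} := by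
  intro u hu z hz hne
  rw [Finset.mem_singleton] at hu hz
  subst hu; subst hz; exact absurd rfl hne

lemma adj_of_lt {V : Type} {T : Tournament V} {f : V → ℕ} {u z : V}
    (h1 : f u < f z) (h2 : T.arc z u) : (T.backedge f).Adj u z := Or.inl ⟨h1, h2⟩

lemma adj_of_lt' {V : Type} {T : Tournament V} {f : V → ℕ} {u z : V}
    (h1 : f z < f u) (h2 : T.arc u z) : (T.backedge f).Adj u z := Or.inr ⟨h1, h2⟩

lemma sum_range_double (g : ℕ → ℕ) (R : ℕ) :
    ∑ j ∈ Finset.range (2*R), g j = ∑ q ∈ Finset.range R, (g (2*q) + g (2*q+1)) := by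
  induction R with
  | zero => simp
  | succ R ih =>
    have h2 : 2*(R+1) = (2*R+1)+1 := by ring
    rw [h2, Finset.sum_range_succ, Finset.sum_range_succ, Finset.sum_range_succ, ih]
    omega

lemma le_two_pow_sub_one (b : ℕ) : b ≤ 2^b - 1 := by
  have := @Nat.lt_two_pow_self b; omega

lemma one_le_two_pow' (b : ℕ) : 1 ≤ 2^b := Nat.one_le_two_pow

lemma two_pow_split (b : ℕ) (hb : 1 ≤ b) : 2^b = 2 * 2^(b-1) := by
  conv_lhs => rw [show b = (b-1)+1 by omega]
  rw [pow_succ']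

lemma mono_split (w : ℕ → ℕ) (hw : Monotone w) (p c : ℕ) :
    Monotone (fun t => 2 * w t + (if w t = p ∧ c < t then 1 else 0)) := by
  intro s t hst
  have h1 : w s ≤ w t := hw hst
  dsimp only
  by_cases hs : w s = p ∧ c < s
  · by_cases ht : w t = p ∧ c < t
    · rw [if_pos hs, if_pos ht]; omega
    · have h2 : w t ≠ p := fun h => ht ⟨h, lt_of_lt_of_le hs.2 hst⟩
      rw [if_pos hs, if_neg ht]; omega
  · by_cases ht : w t = p ∧ c < t
    · rw [if_neg hs, if_pos ht]; omega
    · rw [if_neg hs, if_neg ht]; omega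

end AuxProofs
theorem keyD : ∀ (n : ℕ) (f : DType n → ℕ), Function.Injective f →
    ∀ (w : ℕ → ℕ), Monotone w → ∀ (R : ℕ), (∀ x, w (f x) < R) →
    ∀ (b : ℕ → ℕ),
    (∀ j (K : Finset (DType n)), (∀ x ∈ K, w (f x) = j) →
      BKClique (Dtour n) f K → K.card ≤ b j) →
    n ≤ 1 + ∑ j ∈ Finset.range R, (2 ^ b j - 1) := by
  intro n
  induction n with
  | zero => intro f hf w hw R hR b hb; exact Nat.zero_le _
  | succ n IH =>
    intro f hf w hw R hR b hb
    classical
    set v : DType (n+1) := Sum.inr (Sum.inr ()) with hvdef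
    set p : ℕ := w (f v) with hpdef
    have hpR : p < R := hR v
    have hbp : 1 ≤ b p := by
      have h := hb p {v} (by intro x hx; rw [Finset.mem_singleton] at hx; subst hx; rfl)
        (bk_singleton _ _ _)
      simpa using h
    -- the set of sizes of backedge-cliques inside X ∩ (window p) ∩ after v
    set S : Set ℕ := {c | ∃ K : Finset (DType (n+1)), BKClique (Dtour (n+1)) f K ∧
      (∀ x ∈ K, (∃ u : DType n, x = Sum.inl u) ∧ w (f x) = p ∧ f v < f x) ∧ K.card = c}
      with hSdef
    have hS0 : 0 ∈ S :=
      ⟨∅, bk_empty _ _, fun x hx => absurd hx (Finset.notMem_empty x), Finset.card_empty⟩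
    have hSb : ∀ c ∈ S, c ≤ b p := by
      rintro c ⟨K, hcl, hprop, rfl⟩
      exact hb p K (fun x hx => (hprop x hx).2.1) hcl
    set A : ℕ := sSup S with hAdef
    have hAmem : A ∈ S := Nat.sSup_mem ⟨0, hS0⟩ ⟨b p, fun c hc => hSb c hc⟩
    have hAub : ∀ c ∈ S, c ≤ A := fun c hc => le_csSup ⟨b p, fun c hc => hSb c hc⟩ hc
    obtain ⟨Kw, hKw_cl, hKw_prop, hKw_card⟩ := hAmem
    set w' : ℕ → ℕ := fun t => 2 * w t + (if w t = p ∧ f v < t then 1 else 0) with hw'def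
    have hw'mono : Monotone w' := mono_split w hw p (f v)
    have hw'R : ∀ t, w t < R → w' t < 2*R := by
      intro t ht; simp only [hw'def]; split <;> omega
    by_cases hA0 : A = 0
    · -- descend into X
      set b' : ℕ → ℕ := fun j => if j = 2*p then b p - 1 else if j % 2 = 0 then b (j/2) else 0
        with hb'def
      have hX : ∀ j (K : Finset (DType n)), (∀ x ∈ K, w' (f (Sum.inl x)) = j) →
          BKClique (Dtour n) (fun a => f (Sum.inl a)) K → K.card ≤ b' j := by
        intro j K hKwin hKcl
        set KM : Finset (DType (n+1)) :=
          K.map ⟨Sum.inl, Sum.inl_injective⟩ with hKMdef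
        have hKMmem : ∀ y, y ∈ KM → ∃ x ∈ K, Sum.inl x = y := by
          intro y hy; exact Finset.mem_map.mp hy
        have hKMcl : BKClique (Dtour (n+1)) f KM := by
          intro u hu z hz hne
          obtain ⟨x, hx, rfl⟩ := Finset.mem_map.mp hu
          obtain ⟨y, hy, rfl⟩ := Finset.mem_map.mp hz
          have hxy : x ≠ y := fun h => hne (by rw [h])
          exact hKcl x hx y hy hxy
        rcases K.eq_empty_or_nonempty with hKe | ⟨x0, hx0⟩
        · simp [hKe]
        · have hj0 := hKwin x0 hx0
          simp only [hw'def] at hj0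
          by_cases hc0 : w (f (Sum.inl x0)) = p ∧ f v < f (Sum.inl x0)
          · -- j = 2p+1 : all elements of K lie in window p after v; bound A = 0
            have hj1 : j = 2*p+1 := by rw [if_pos hc0] at hj0; omega
            have hall : ∀ x ∈ K, w (f (Sum.inl x)) = p ∧ f v < f (Sum.inl x) := by
              intro x hx
              have hj2 := hKwin x hx
              simp only [hw'def] at hj2
              by_cases hc : w (f (Sum.inl x)) = p ∧ f v < f (Sum.inl x)
              · exact hc
              · exfalso; rw [if_neg hc] at hj2; omega
            have hmemS : K.card ∈ S := by
              refine ⟨KM, hKMcl, ?_, by simp [hKMdef]⟩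
              intro y hy
              obtain ⟨x, hx, rfl⟩ := Finset.mem_map.mp hy
              exact ⟨⟨x, rfl⟩, (hall x hx).1, (hall x hx).2⟩
            have hcard : K.card ≤ A := hAub _ hmemS
            have hb'j : b' j = 0 := by
              simp only [hb'def]; rw [hj1, if_neg (by omega), if_neg (by omega)]
            omega
          · -- j = 2 * (w (f (Sum.inl x0)))
            have hj1 : j = 2 * w (f (Sum.inl x0)) := by rw [if_neg hc0] at hj0; omega
            have hall : ∀ x ∈ K, w (f (Sum.inl x)) = w (f (Sum.inl x0)) ∧
                ¬(w (f (Sum.inl x)) = p ∧ f v < f (Sum.inl x)) := by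
              intro x hx
              have hj2 := hKwin x hx
              simp only [hw'def] at hj2
              by_cases hc : w (f (Sum.inl x)) = p ∧ f v < f (Sum.inl x)
              · rw [if_pos hc] at hj2; omega
              · rw [if_neg hc] at hj2; exact ⟨by omega, hc⟩
            by_cases hqp : w (f (Sum.inl x0)) = p
            · -- window 2p : everything before v in window p; add v
              have hball : ∀ x ∈ K, w (f (Sum.inl x)) = p ∧ f (Sum.inl x) < f v := by
                intro x hx
                have h1 := (hall x hx).1
                have h2 := (hall x hx).2
                have h1p : w (f (Sum.inl x)) = p := by rw [h1, hqp]
                have h3 : ¬ f v < f (Sum.inl x) := fun hlt => h2 ⟨h1p, hlt⟩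
                have h4 : Sum.inl x ≠ v := by rw [hvdef]; exact fun h => Sum.inl_ne_inr h
                have h5 : f (Sum.inl x) ≠ f v := fun he => h4 (hf he)
                exact ⟨h1p, by omega⟩
              have hvnot : v ∉ KM := by
                intro hmem
                obtain ⟨x, hx, he⟩ := Finset.mem_map.mp hmem
                rw [hvdef] at he; exact Sum.inl_ne_inr he
              have hins : BKClique (Dtour (n+1)) f (insert v KM) := by
                intro u hu z hz hne
                rcases Finset.mem_insert.mp hu with rfl | hu'
                · rcases Finset.mem_insert.mp hz with rfl | hz'
                  · exact absurd rfl hne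
                  · obtain ⟨x, hx, rfl⟩ := Finset.mem_map.mp hz'
                    exact adj_of_lt' (hball x hx).2 trivial
                · rcases Finset.mem_insert.mp hz with rfl | hz'
                  · obtain ⟨x, hx, rfl⟩ := Finset.mem_map.mp hu'
                    exact adj_of_lt (hball x hx).2 trivial
                  · exact hKMcl u hu' z hz' hne
              have hcard := hb p (insert v KM) ?_ hins
              · rw [Finset.card_insert_of_notMem hvnot, Finset.card_map] at hcard
                have hb'j : b' j = b p - 1 := by
                  simp only [hb'def]
                  rw [if_pos (by omega)]
                omega
              · intro x hx
                rcases Finset.mem_insert.mp hx with rfl | hx'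
                · exact hpdef.symm
                · obtain ⟨y, hy, rfl⟩ := Finset.mem_map.mp hx'
                  exact (hball y hy).1
            · -- ordinary even window
              have hcard := hb (w (f (Sum.inl x0))) KM ?_ hKMcl
              · rw [Finset.card_map] at hcard
                have hb'j : b' j = b (w (f (Sum.inl x0))) := by
                  simp only [hb'def]
                  rw [if_neg (by omega), if_pos (by omega)]
                  congr 1
                  omega
                omega
              · intro x hx
                obtain ⟨y, hy, rfl⟩ := Finset.mem_map.mp hx
                exact (hall y hy).1
      have hres := IH (fun a => f (Sum.inl a)) (fun a c hac => Sum.inl_injective (hf hac))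
        w' hw'mono (2*R) (fun x => hw'R _ (hR (Sum.inl x))) b' hX
      have hsum : ∑ j ∈ Finset.range (2*R), (2 ^ b' j - 1) <
          ∑ j ∈ Finset.range R, (2 ^ b j - 1) := by
        rw [sum_range_double]
        apply Finset.sum_lt_sum
        · intro q hq
          by_cases hqp : q = p
          · subst hqp
            have e1 : b' (2*p) = b p - 1 := by simp [hb'def]
            have e2 : b' (2*p+1) = 0 := by
              simp only [hb'def]; rw [if_neg (by omega), if_neg (by omega)]
            rw [e1, e2]
            have hpow : 2^(b p) = 2 * 2^(b p - 1) := two_pow_split _ hbp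
            have h1 := one_le_two_pow' (b p - 1)
            omega
          · have e1 : b' (2*q) = b q := by
              simp only [hb'def]
              rw [if_neg (by omega), if_pos (by omega)]
              congr 1; omega
            have e2 : b' (2*q+1) = 0 := by
              simp only [hb'def]; rw [if_neg (by omega), if_neg (by omega)]
            rw [e1, e2]; simp
        · refine ⟨p, Finset.mem_range.mpr hpR, ?_⟩
          have e1 : b' (2*p) = b p - 1 := by simp [hb'def]
          have e2 : b' (2*p+1) = 0 := by
            simp only [hb'def]; rw [if_neg (by omega), if_neg (by omega)]
          rw [e1, e2]
          have hpow : 2^(b p) = 2 * 2^(b p - 1) := two_pow_split _ hbp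
          have h1 := one_le_two_pow' (b p - 1)
          omega
      omega
    · -- A ≥ 1 : descend into Y
      set b' : ℕ → ℕ := fun j => if j = 2*p then b p - A else if j = 2*p+1 then b p - 1
        else if j % 2 = 0 then b (j/2) else 0 with hb'def
      have hY : ∀ j (K : Finset (DType n)), (∀ x ∈ K, w' (f (Sum.inr (Sum.inl x))) = j) →
          BKClique (Dtour n) (fun a => f (Sum.inr (Sum.inl a))) K → K.card ≤ b' j := by
        intro j K hKwin hKcl
        set KM : Finset (DType (n+1)) :=
          K.map ⟨fun a => Sum.inr (Sum.inl a),
            fun a c h => Sum.inl_injective (Sum.inr_injective h)⟩ with hKMdef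
        have hKMcl : BKClique (Dtour (n+1)) f KM := by
          intro u hu z hz hne
          obtain ⟨x, hx, rfl⟩ := Finset.mem_map.mp hu
          obtain ⟨y, hy, rfl⟩ := Finset.mem_map.mp hz
          have hxy : x ≠ y := fun h => hne (by rw [h])
          exact hKcl x hx y hy hxy
        rcases K.eq_empty_or_nonempty with hKe | ⟨x0, hx0⟩
        · simp [hKe]
        · have hj0 := hKwin x0 hx0
          simp only [hw'def] at hj0
          by_cases hc0 : w (f (Sum.inr (Sum.inl x0))) = p ∧ f v < f (Sum.inr (Sum.inl x0))
          · -- j = 2p+1 : Y-part after v in window p; add v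
            have hj1 : j = 2*p+1 := by rw [if_pos hc0] at hj0; omega
            have hall : ∀ x ∈ K, w (f (Sum.inr (Sum.inl x))) = p ∧
                f v < f (Sum.inr (Sum.inl x)) := by
              intro x hx
              have hj2 := hKwin x hx
              simp only [hw'def] at hj2
              by_cases hc : w (f (Sum.inr (Sum.inl x))) = p ∧ f v < f (Sum.inr (Sum.inl x))
              · exact hc
              · exfalso; rw [if_neg hc] at hj2; omega
            have hvnot : v ∉ KM := by
              intro hmem
              obtain ⟨x, hx, he⟩ := Finset.mem_map.mp hmem
              rw [hvdef] at he
              exact Sum.inl_ne_inr (Sum.inr_injective he)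
            have hins : BKClique (Dtour (n+1)) f (insert v KM) := by
              intro u hu z hz hne
              rcases Finset.mem_insert.mp hu with rfl | hu'
              · rcases Finset.mem_insert.mp hz with rfl | hz'
                · exact absurd rfl hne
                · obtain ⟨x, hx, rfl⟩ := Finset.mem_map.mp hz'
                  exact adj_of_lt (hall x hx).2 trivial
              · rcases Finset.mem_insert.mp hz with rfl | hz'
                · obtain ⟨x, hx, rfl⟩ := Finset.mem_map.mp hu'
                  exact adj_of_lt' (hall x hx).2 trivial
                · exact hKMcl u hu' z hz' hne
            have hcard := hb p (insert v KM) ?_ hins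
            · rw [Finset.card_insert_of_notMem hvnot, Finset.card_map] at hcard
              have hb'j : b' j = b p - 1 := by
                simp only [hb'def]
                rw [if_neg (by omega), if_pos (by omega)]
              omega
            · intro x hx
              rcases Finset.mem_insert.mp hx with rfl | hx'
              · exact hpdef.symm
              · obtain ⟨y, hy, rfl⟩ := Finset.mem_map.mp hx'
                exact (hall y hy).1
          · have hj1 : j = 2 * w (f (Sum.inr (Sum.inl x0))) := by rw [if_neg hc0] at hj0; omega
            have hall : ∀ x ∈ K, w (f (Sum.inr (Sum.inl x))) = w (f (Sum.inr (Sum.inl x0))) ∧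
                ¬(w (f (Sum.inr (Sum.inl x))) = p ∧ f v < f (Sum.inr (Sum.inl x))) := by
              intro x hx
              have hj2 := hKwin x hx
              simp only [hw'def] at hj2
              by_cases hc : w (f (Sum.inr (Sum.inl x))) = p ∧ f v < f (Sum.inr (Sum.inl x))
              · rw [if_pos hc] at hj2; omega
              · rw [if_neg hc] at hj2; exact ⟨by omega, hc⟩
            by_cases hqp : w (f (Sum.inr (Sum.inl x0))) = p
            · -- window 2p : Y-part before v in window p; combine with the X-witness clique Kw
              have hball : ∀ x ∈ K, w (f (Sum.inr (Sum.inl x))) = p ∧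
                  f (Sum.inr (Sum.inl x)) < f v := by
                intro x hx
                have h1 := (hall x hx).1
                have h2 := (hall x hx).2
                have h1p : w (f (Sum.inr (Sum.inl x))) = p := by rw [h1, hqp]
                have h3 : ¬ f v < f (Sum.inr (Sum.inl x)) := fun hlt => h2 ⟨h1p, hlt⟩
                have h4 : Sum.inr (Sum.inl x) ≠ v := by
                  rw [hvdef]; exact fun h => Sum.inl_ne_inr (Sum.inr_injective h)
                have h5 : f (Sum.inr (Sum.inl x)) ≠ f v := fun he => h4 (hf he)
                exact ⟨h1p, by omega⟩
              have hdisj : Disjoint KM Kw := by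
                rw [Finset.disjoint_left]
                intro a haM haW
                obtain ⟨x, hx, rfl⟩ := Finset.mem_map.mp haM
                obtain ⟨y, hyy⟩ := (hKw_prop _ haW).1
                exact Sum.inr_ne_inl hyy
              have hcl2 : BKClique (Dtour (n+1)) f (KM ∪ Kw) := by
                intro u hu z hz hne
                rcases Finset.mem_union.mp hu with hu' | hu' <;>
                  rcases Finset.mem_union.mp hz with hz' | hz'
                · exact hKMcl u hu' z hz' hne
                · obtain ⟨x, hx, rfl⟩ := Finset.mem_map.mp hu'
                  obtain ⟨y, hyy⟩ := (hKw_prop z hz').1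
                  refine adj_of_lt (lt_trans (hball x hx).2 (hKw_prop z hz').2.2) ?_
                  rw [hyy]; trivial
                · obtain ⟨x, hx, rfl⟩ := Finset.mem_map.mp hz'
                  obtain ⟨y, hyy⟩ := (hKw_prop u hu').1
                  refine adj_of_lt' (lt_trans (hball x hx).2 (hKw_prop u hu').2.2) ?_
                  rw [hyy]; trivial
                · exact hKw_cl u hu' z hz' hne
              have hcard := hb p (KM ∪ Kw) ?_ hcl2
              · rw [Finset.card_union_of_disjoint hdisj, Finset.card_map, hKw_card] at hcard
                have hb'j : b' j = b p - A := by
                  simp only [hb'def]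
                  rw [if_pos (by omega)]
                omega
              · intro x hx
                rcases Finset.mem_union.mp hx with hx' | hx'
                · obtain ⟨y, hy, rfl⟩ := Finset.mem_map.mp hx'
                  exact (hball y hy).1
                · exact (hKw_prop x hx').2.1
            · -- ordinary even window
              have hcard := hb (w (f (Sum.inr (Sum.inl x0)))) KM ?_ hKMcl
              · rw [Finset.card_map] at hcard
                have hb'j : b' j = b (w (f (Sum.inr (Sum.inl x0)))) := by
                  simp only [hb'def]
                  rw [if_neg (by omega), if_neg (by omega), if_pos (by omega)]
                  congr 1
                  omega
                omega
              · intro x hx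
                obtain ⟨y, hy, rfl⟩ := Finset.mem_map.mp hx
                exact (hall y hy).1
      have hres := IH (fun a => f (Sum.inr (Sum.inl a)))
        (fun a c hac => Sum.inl_injective (Sum.inr_injective (hf hac)))
        w' hw'mono (2*R) (fun x => hw'R _ (hR (Sum.inr (Sum.inl x)))) b' hY
      have hsum : ∑ j ∈ Finset.range (2*R), (2 ^ b' j - 1) <
          ∑ j ∈ Finset.range R, (2 ^ b j - 1) := by
        rw [sum_range_double]
        have hkey : ∀ q, q = p → (2 ^ b' (2*q) - 1) + (2 ^ b' (2*q+1) - 1) < 2 ^ b q - 1 := by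
          intro q hq; subst hq
          have e1 : b' (2*p) = b p - A := by simp [hb'def]
          have e2 : b' (2*p+1) = b p - 1 := by
            simp only [hb'def]; rw [if_neg (by omega)]; simp
          rw [e1, e2]
          have hpow : 2^(b p) = 2 * 2^(b p - 1) := two_pow_split _ hbp
          have h1 := one_le_two_pow' (b p - 1)
          have h2 : 2^(b p - A) ≤ 2^(b p - 1) :=
            Nat.pow_le_pow_right (by norm_num) (by omega)
          omega
        apply Finset.sum_lt_sum
        · intro q hq
          by_cases hqp : q = p
          · exact le_of_lt (hkey q hqp)
          · have e1 : b' (2*q) = b q := by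
              simp only [hb'def]
              rw [if_neg (by omega), if_neg (by omega), if_pos (by omega)]
              congr 1; omega
            have e2 : b' (2*q+1) = 0 := by
              simp only [hb'def]
              rw [if_neg (by omega), if_neg (by omega), if_neg (by omega)]
            rw [e1, e2]; simp
        · exact ⟨p, Finset.mem_range.mpr hpR, hkey p rfl⟩
      omega
theorem keyA : ∀ (n : ℕ) (f : AType n → ℕ), Function.Injective f →
    ∀ (w : ℕ → ℕ), Monotone w → ∀ (R : ℕ), (∀ x, w (f x) < R) →
    ∀ (b : ℕ → ℕ),
    (∀ j (K : Finset (AType n)), (∀ x ∈ K, w (f x) = j) →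
      BKClique (Atour n) f K → K.card ≤ b j) →
    n ≤ 1 + ∑ j ∈ Finset.range R, (2 ^ b j - 1) := by
  intro n
  induction n with
  | zero => intro f hf w hw R hR b hb; exact Nat.zero_le _
  | succ n IH =>
    intro f hf w hw R hR b hb
    classical
    letI : DecidableEq (AType (n+1)) := Classical.decEq _
    by_cases hdec : ∃ k k' : Fin (n+1), (k:ℕ) < (k':ℕ) ∧ f (Sum.inr k') < f (Sum.inr k) ∧
        w (f (Sum.inr k')) = w (f (Sum.inr k))
    · -- descend into the copy T_k
      obtain ⟨k, k', hkk', hfdec, hwin⟩ := hdec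
      have hkn : (k:ℕ) < n := by have := k'.isLt; omega
      set p : ℕ := w (f (Sum.inr k)) with hpdef
      have hpR : p < R := hR _
      have hbp : 1 ≤ b p := by
        have h := hb p (@singleton (AType (n+1)) _ _ (Sum.inr k))
          (by intro x hx; have hx := Finset.mem_singleton.mp hx; subst hx; exact hpdef.symm)
          (bk_singleton _ _ _)
        exact le_trans (Finset.card_singleton _).ge h
      set e : AType n → AType (n+1) := fun a => Sum.inl (⟨(k:ℕ), hkn⟩, a) with hedef
      have hei : Function.Injective e := by
        intro a c h
        simp only [hedef] at h
        exact (Prod.ext_iff.mp (Sum.inl_injective h)).2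
      have harc : ∀ a c : AType n, (Atour n).arc a c → (Atour (n+1)).arc (e a) (e c) := by
        intro a c h
        exact Or.inr ⟨rfl, h⟩
      set w' : ℕ → ℕ := fun t => 2 * w t + (if w t = p ∧ f (Sum.inr k) < t then 1 else 0)
        with hw'def
      have hw'mono : Monotone w' := mono_split w hw p (f (Sum.inr k))
      have hw'R : ∀ t, w t < R → w' t < 2*R := by
        intro t ht; simp only [hw'def]; split <;> omega
      set b' : ℕ → ℕ := fun j => if j = 2*p then b p - 1 else if j = 2*p + 1 then b p - 1
        else if j % 2 = 0 then b (j/2) else 0 with hb'def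
      have hA : ∀ j (K : Finset (AType n)), (∀ x ∈ K, w' (f (e x)) = j) →
          BKClique (Atour n) (fun a => f (e a)) K → K.card ≤ b' j := by
        intro j K hKwin hKcl
        set KM : Finset (AType (n+1)) := K.map ⟨e, hei⟩ with hKMdef
        have hKMcl : BKClique (Atour (n+1)) f KM := by
          intro u hu z hz hne
          obtain ⟨x, hx, rfl⟩ := Finset.mem_map.mp hu
          obtain ⟨y, hy, rfl⟩ := Finset.mem_map.mp hz
          have hxy : x ≠ y := fun h => hne (by rw [h])
          rcases hKcl x hx y hy hxy with ⟨h1, h2⟩ | ⟨h1, h2⟩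
          · exact Or.inl ⟨h1, harc _ _ h2⟩
          · exact Or.inr ⟨h1, harc _ _ h2⟩
        rcases K.eq_empty_or_nonempty with hKe | ⟨x0, hx0⟩
        · simp [hKe]
        · have hj0 := hKwin x0 hx0
          simp only [hw'def] at hj0
          by_cases hc0 : w (f (e x0)) = p ∧ f (Sum.inr k) < f (e x0)
          · -- j = 2p+1: copy-part of window p after v_k; add v_k'
            have hj1 : j = 2*p+1 := by rw [if_pos hc0] at hj0; omega
            have hall : ∀ x ∈ K, w (f (e x)) = p ∧ f (Sum.inr k) < f (e x) := by
              intro x hx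
              have hj2 := hKwin x hx
              simp only [hw'def] at hj2
              by_cases hc : w (f (e x)) = p ∧ f (Sum.inr k) < f (e x)
              · exact hc
              · exfalso; rw [if_neg hc] at hj2; omega
            have hvnot : Sum.inr k' ∉ KM := by
              intro hmem
              obtain ⟨x, hx, he⟩ := Finset.mem_map.mp hmem
              simp only [hedef] at he
              exact Sum.inl_ne_inr he
            have hins : BKClique (Atour (n+1)) f (insert (Sum.inr k') KM) := by
              intro u hu z hz hne
              rcases Finset.mem_insert.mp hu with rfl | hu'
              · rcases Finset.mem_insert.mp hz with rfl | hz'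
                · exact absurd rfl hne
                · obtain ⟨x, hx, rfl⟩ := Finset.mem_map.mp hz'
                  exact adj_of_lt (lt_trans hfdec (hall x hx).2) hkk'
              · rcases Finset.mem_insert.mp hz with rfl | hz'
                · obtain ⟨x, hx, rfl⟩ := Finset.mem_map.mp hu'
                  exact adj_of_lt' (lt_trans hfdec (hall x hx).2) hkk'
                · exact hKMcl u hu' z hz' hne
            have hcard := hb p (@insert (AType (n+1)) _ _ (Sum.inr k') KM) ?_ hins
            · replace hcard := (Finset.card_insert_of_notMem (α := AType (n+1)) hvnot).symm.trans_le hcard; rw [Finset.card_map] at hcard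
              have hb'j : b' j = b p - 1 := by
                simp only [hb'def]; rw [if_neg (by omega)]; simp [hj1]
              omega
            · intro x hx
              rcases Finset.mem_insert.mp hx with rfl | hx'
              · exact hwin
              · obtain ⟨y, hy, rfl⟩ := Finset.mem_map.mp hx'
                exact (hall y hy).1
          · have hj1 : j = 2 * w (f (e x0)) := by rw [if_neg hc0] at hj0; omega
            have hall : ∀ x ∈ K, w (f (e x)) = w (f (e x0)) ∧
                ¬(w (f (e x)) = p ∧ f (Sum.inr k) < f (e x)) := by
              intro x hx
              have hj2 := hKwin x hx
              simp only [hw'def] at hj2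
              by_cases hc : w (f (e x)) = p ∧ f (Sum.inr k) < f (e x)
              · rw [if_pos hc] at hj2; omega
              · rw [if_neg hc] at hj2; exact ⟨by omega, hc⟩
            by_cases hqp : w (f (e x0)) = p
            · -- window 2p: before v_k; add v_k
              have hball : ∀ x ∈ K, w (f (e x)) = p ∧ f (e x) < f (Sum.inr k) := by
                intro x hx
                have h1 := (hall x hx).1
                have h2 := (hall x hx).2
                have h1p : w (f (e x)) = p := by rw [h1, hqp]
                have h3 : ¬ f (Sum.inr k) < f (e x) := fun hlt => h2 ⟨h1p, hlt⟩
                have h4 : e x ≠ Sum.inr k := by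
                  simp only [hedef]; exact fun h => Sum.inl_ne_inr h
                have h5 : f (e x) ≠ f (Sum.inr k) := fun he => h4 (hf he)
                exact ⟨h1p, by omega⟩
              have hvnot : Sum.inr k ∉ KM := by
                intro hmem
                obtain ⟨x, hx, he⟩ := Finset.mem_map.mp hmem
                simp only [hedef] at he
                exact Sum.inl_ne_inr he
              have hins : BKClique (Atour (n+1)) f (insert (Sum.inr k) KM) := by
                intro u hu z hz hne
                rcases Finset.mem_insert.mp hu with rfl | hu'
                · rcases Finset.mem_insert.mp hz with rfl | hz'
                  · exact absurd rfl hne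
                  · obtain ⟨x, hx, rfl⟩ := Finset.mem_map.mp hz'
                    exact adj_of_lt' (hball x hx).2 (le_refl (k:ℕ))
                · rcases Finset.mem_insert.mp hz with rfl | hz'
                  · obtain ⟨x, hx, rfl⟩ := Finset.mem_map.mp hu'
                    exact adj_of_lt (hball x hx).2 (le_refl (k:ℕ))
                  · exact hKMcl u hu' z hz' hne
              have hcard := hb p (@insert (AType (n+1)) _ _ (Sum.inr k) KM) ?_ hins
              · replace hcard := (Finset.card_insert_of_notMem (α := AType (n+1)) hvnot).symm.trans_le hcard; rw [Finset.card_map] at hcard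
                have hb'j : b' j = b p - 1 := by
                  simp only [hb'def]
                  rw [if_pos (by omega)]
                omega
              · intro x hx
                rcases Finset.mem_insert.mp hx with rfl | hx'
                · exact hpdef.symm
                · obtain ⟨y, hy, rfl⟩ := Finset.mem_map.mp hx'
                  exact (hball y hy).1
            · -- ordinary window
              have hcard := hb (w (f (e x0))) KM ?_ hKMcl
              · rw [Finset.card_map] at hcard
                have hb'j : b' j = b (w (f (e x0))) := by
                  simp only [hb'def]
                  rw [if_neg (by omega), if_neg (by omega), if_pos (by omega)]
                  congr 1
                  omega
                omega
              · intro x hx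
                obtain ⟨y, hy, rfl⟩ := Finset.mem_map.mp hx
                exact (hall y hy).1
      have hres := IH (fun a => f (e a)) (fun a c hac => hei (hf hac))
        w' hw'mono (2*R) (fun x => hw'R _ (hR (e x))) b' hA
      have hsum : ∑ j ∈ Finset.range (2*R), (2 ^ b' j - 1) <
          ∑ j ∈ Finset.range R, (2 ^ b j - 1) := by
        rw [sum_range_double]
        have hkey : ∀ q, q = p → (2 ^ b' (2*q) - 1) + (2 ^ b' (2*q+1) - 1) < 2 ^ b q - 1 := by
          intro q hq; subst hq
          have e1 : b' (2*p) = b p - 1 := by simp [hb'def]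
          have e2 : b' (2*p+1) = b p - 1 := by
            simp only [hb'def]; rw [if_neg (by omega)]; simp
          rw [e1, e2]
          have hpow : 2^(b p) = 2 * 2^(b p - 1) := two_pow_split _ hbp
          have h1 := one_le_two_pow' (b p - 1)
          omega
        apply Finset.sum_lt_sum
        · intro q hq
          by_cases hqp : q = p
          · exact le_of_lt (hkey q hqp)
          · have e1 : b' (2*q) = b q := by
              simp only [hb'def]
              rw [if_neg (by omega), if_neg (by omega), if_pos (by omega)]
              congr 1; omega
            have e2 : b' (2*q+1) = 0 := by
              simp only [hb'def]
              rw [if_neg (by omega), if_neg (by omega), if_neg (by omega)]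
            rw [e1, e2]; simp
        · exact ⟨p, Finset.mem_range.mpr hpR, hkey p rfl⟩
      omega
    · -- no descending pair: the apexes in each window form cliques
      have hcount : n + 1 ≤ ∑ j ∈ Finset.range R, b j := by
        have h1 : (Finset.univ : Finset (Fin (n+1))).card = n+1 := by simp
        rw [← h1, Finset.card_eq_sum_card_fiberwise
          (f := fun k : Fin (n+1) => w (f (Sum.inr k))) (t := Finset.range R)
          (fun x _ => Finset.mem_range.mpr (hR _))]
        apply Finset.sum_le_sum
        intro j hj
        have happ := hb j (((Finset.univ : Finset (Fin (n+1))).filter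
            (fun k : Fin (n+1) => w (f (Sum.inr k)) = j)).map
          ⟨fun k => Sum.inr k, fun a c h => Sum.inr_injective h⟩) ?_ ?_
        · simpa using happ
        · intro x hx
          obtain ⟨y, hy, rfl⟩ := Finset.mem_map.mp hx
          exact (Finset.mem_filter.mp hy).2
        · intro u hu z hz hne
          obtain ⟨a, ha, rfl⟩ := Finset.mem_map.mp hu
          obtain ⟨c, hc, rfl⟩ := Finset.mem_map.mp hz
          change ((Atour (n+1)).backedge f).Adj (Sum.inr a) (Sum.inr c)
          have hac : a ≠ c := fun h => hne (by rw [h])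
          have hfne : f (Sum.inr a) ≠ f (Sum.inr c) := fun h => hac (Sum.inr_injective (hf h))
          have hwina : w (f (Sum.inr a)) = j := (Finset.mem_filter.mp ha).2
          have hwinc : w (f (Sum.inr c)) = j := (Finset.mem_filter.mp hc).2
          rcases Nat.lt_trichotomy (a:ℕ) (c:ℕ) with hlt | heq | hgt
          · have hnotdec : ¬ (f (Sum.inr c) < f (Sum.inr a)) := fun hlt2 =>
              hdec ⟨a, c, hlt, hlt2, by rw [hwina, hwinc]⟩
            exact adj_of_lt (by omega) hlt
          · exact absurd (Fin.ext heq) hac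
          · have hnotdec : ¬ (f (Sum.inr a) < f (Sum.inr c)) := fun hlt2 =>
              hdec ⟨c, a, hgt, hlt2, by rw [hwina, hwinc]⟩
            exact adj_of_lt' (by omega) hgt
      have h2 : ∑ j ∈ Finset.range R, b j ≤ ∑ j ∈ Finset.range R, (2^(b j) - 1) :=
        Finset.sum_le_sum (fun j _ => le_two_pow_sub_one (b j))
      omega
open Tournament in
/-- Lemma 2: `ω⃗(A n) → ∞` and `ω⃗(D n) → ∞` as `n → ∞`. -/
theorem stmt_1 :
    ∀ k : ℕ, ∃ N : ℕ, ∀ n : ℕ, N ≤ n →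
      k ≤ (Atour n).cliqueNum ∧ k ≤ (Dtour n).cliqueNum := by
  intro k
  refine ⟨2^k, fun n hn => ⟨?_, ?_⟩⟩
  · apply le_csInf
    · obtain ⟨f, hf⟩ := exists_injective_nat (AType n)
      exact ⟨_, f, hf, rfl⟩
    · rintro m ⟨f, hf, rfl⟩
      have hbound : ∀ (j : ℕ) (K : Finset (AType n)), (∀ x ∈ K, (fun _ : ℕ => 0) (f x) = j) →
          BKClique (Atour n) f K → K.card ≤ ((Atour n).backedge f).cliqueNum := by
        intro j K _ hcl
        have hclique : ((Atour n).backedge f).IsClique (K : Set (AType n)) :=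
          fun u hu z hz hne => hcl u (Finset.mem_coe.mp hu) z (Finset.mem_coe.mp hz) hne
        exact SimpleGraph.IsClique.card_le_cliqueNum (tc := hclique)
      have hkey := keyA n f hf (fun _ => 0) monotone_const 1 (fun _ => Nat.one_pos)
        (fun _ => ((Atour n).backedge f).cliqueNum) hbound
      rw [Finset.sum_range_one] at hkey
      beta_reduce at hkey
      have h1 := one_le_two_pow' (((Atour n).backedge f).cliqueNum)
      have h2 : 2^k ≤ 2^(((Atour n).backedge f).cliqueNum) := by omega
      exact (Nat.pow_le_pow_iff_right (by norm_num)).mp h2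
  · apply le_csInf
    · obtain ⟨f, hf⟩ := exists_injective_nat (DType n)
      exact ⟨_, f, hf, rfl⟩
    · rintro m ⟨f, hf, rfl⟩
      have hbound : ∀ (j : ℕ) (K : Finset (DType n)), (∀ x ∈ K, (fun _ : ℕ => 0) (f x) = j) →
          BKClique (Dtour n) f K → K.card ≤ ((Dtour n).backedge f).cliqueNum := by
        intro j K _ hcl
        have hclique : ((Dtour n).backedge f).IsClique (K : Set (DType n)) :=
          fun u hu z hz hne => hcl u (Finset.mem_coe.mp hu) z (Finset.mem_coe.mp hz) hne
        exact SimpleGraph.IsClique.card_le_cliqueNum (tc := hclique)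
      have hkey := keyD n f hf (fun _ => 0) monotone_const 1 (fun _ => Nat.one_pos)
        (fun _ => ((Dtour n).backedge f).cliqueNum) hbound
      rw [Finset.sum_range_one] at hkey
      beta_reduce at hkey
      have h1 := one_le_two_pow' (((Dtour n).backedge f).cliqueNum)
      have h2 : 2^k ≤ 2^(((Dtour n).backedge f).cliqueNum) := by omega
      exact (Nat.pow_le_pow_iff_right (by norm_num)).mp h2
end

section
/- Let r > 0 be an integer and let T be a tournament containing an r-mountain. Then ω⃗(T) ≥ ⌊log₂(r)⌋. -/
open Tournament in
open Finset in
theorem mountain_cell_sum {V : Type} [Fintype V] (T : Tournament V) (f : V → ℕ)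
    (hf : Function.Injective f) :
    ∀ (n : ℕ) (M : Set V), T.IsMtn (n + 1) M → ∀ Θ : Finset ℕ,
      ∃ K : Finset ℕ → Finset V,
        (∀ S : Finset ℕ, ∀ x ∈ K S, x ∈ M ∧ Θ.filter (fun θ => θ < f x) = S) ∧
        (∀ S : Finset ℕ, (T.backedge f).IsClique (K S : Set V)) ∧
        n + 1 ≤ ∑ S ∈ Θ.powerset, (2 ^ (K S).card - 1) := by
  classical
  intro n
  induction n with
  | zero =>
    intro M hM Θ
    obtain ⟨v, rfl⟩ : ∃ v, M = {v} := hM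
    refine ⟨fun S => if S = Θ.filter (fun θ => θ < f v) then {v} else ∅, ?_, ?_, ?_⟩
    · intro S x hx
      dsimp only at hx
      by_cases h : S = Θ.filter (fun θ => θ < f v)
      · rw [if_pos h, Finset.mem_singleton] at hx
        subst hx
        exact ⟨rfl, h.symm⟩
      · rw [if_neg h] at hx
        exact absurd hx (Finset.notMem_empty x)
    · intro S
      dsimp only
      by_cases h : S = Θ.filter (fun θ => θ < f v)
      · rw [if_pos h]
        intro x hx y hy hxy
        simp only [Finset.coe_singleton, Set.mem_singleton_iff] at hx hy
        exact absurd (hx.trans hy.symm) hxy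
      · rw [if_neg h]
        simp
    · have hmem : Θ.filter (fun θ => θ < f v) ∈ Θ.powerset :=
        Finset.mem_powerset.mpr (Finset.filter_subset _ _)
      have h1 := Finset.single_le_sum
        (f := fun S => 2 ^ ((if S = Θ.filter (fun θ => θ < f v) then ({v} : Finset V) else ∅)).card - 1)
        (fun i _ => Nat.zero_le _) hmem
      simpa using h1
  | succ n ih =>
    intro M hM Θ
    have hM' : T.IsRSMtnAux (T.IsMtn (n + 1)) (n + 2) M := hM
    obtain ⟨K₀, hK₀M, hK₀card, hK₀⟩ := hM'.1
    by_cases hA : ∃ u ∈ K₀, ∃ v ∈ K₀, T.arc u v ∧ f u < f v ∧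
        Θ.filter (fun θ => θ < f u) = Θ.filter (fun θ => θ < f v)
    · obtain ⟨u, hu, v, hv, harc, hful, hfibuv⟩ := hA
      obtain ⟨W, hWM, hWmtn, hWu, hvW⟩ := hK₀ u hu v hv harc
      have hfuΘ : f u ∉ Θ := by
        intro hmem
        have h1 : f u ∈ Θ.filter (fun θ => θ < f v) := Finset.mem_filter.mpr ⟨hmem, hful⟩
        rw [← hfibuv, Finset.mem_filter] at h1
        exact absurd h1.2 (lt_irrefl _)
      obtain ⟨K', hK'mem, hK'clq, hK'sum⟩ := ih W hWmtn (insert (f u) Θ)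
      have huW : u ∉ W := fun h => T.loopless u (hWu u h)
      have hvWn : v ∉ W := fun h => T.loopless v (hvW v h)
      set D := Θ.filter (fun θ => θ < f u) with hD
      have hfuD : f u ∉ D := fun h => hfuΘ (Finset.mem_filter.mp h).1
      have hDmem : D ∈ Θ.powerset := Finset.mem_powerset.mpr (Finset.filter_subset _ _)
      -- facts about fibers of the K' cliques
      have fact1 : ∀ S : Finset ℕ, f u ∉ S → ∀ x ∈ K' (insert (f u) S),
          x ∈ W ∧ f u < f x ∧ Θ.filter (fun θ => θ < f x) = S := by
        intro S hfuS x hx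
        obtain ⟨hxW, hxfib⟩ := hK'mem _ x hx
        have hlt : f u < f x := by
          have h2 : f u ∈ (insert (f u) Θ).filter (fun θ => θ < f x) := by
            rw [hxfib]; exact Finset.mem_insert_self _ _
          exact (Finset.mem_filter.mp h2).2
        refine ⟨hxW, hlt, ?_⟩
        have h2 : (insert (f u) Θ).filter (fun θ => θ < f x)
            = insert (f u) (Θ.filter (fun θ => θ < f x)) := by
          rw [Finset.filter_insert, if_pos hlt]
        have h3 : insert (f u) (Θ.filter (fun θ => θ < f x)) = insert (f u) S := by
          rw [← h2, hxfib]
        have h4 : f u ∉ Θ.filter (fun θ => θ < f x) :=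
          fun h => hfuΘ (Finset.mem_filter.mp h).1
        calc Θ.filter (fun θ => θ < f x)
            = (insert (f u) (Θ.filter (fun θ => θ < f x))).erase (f u) :=
              (Finset.erase_insert h4).symm
          _ = (insert (f u) S).erase (f u) := by rw [h3]
          _ = S := Finset.erase_insert hfuS
      have fact2 : ∀ S : Finset ℕ, f u ∉ S → ∀ x ∈ K' S,
          x ∈ W ∧ ¬ (f u < f x) ∧ Θ.filter (fun θ => θ < f x) = S := by
        intro S hfuS x hx
        obtain ⟨hxW, hxfib⟩ := hK'mem _ x hx
        have hnlt : ¬ (f u < f x) := by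
          intro hlt
          apply hfuS
          rw [← hxfib]
          exact Finset.mem_filter.mpr ⟨Finset.mem_insert_self _ _, hlt⟩
        refine ⟨hxW, hnlt, ?_⟩
        rw [← hxfib, Finset.filter_insert, if_neg hnlt]
      -- the new clique assignment
      set Knew : Finset ℕ → Finset V := fun S =>
        if f u ∈ S then ∅
        else if S = D then
          (if (K' D).card ≤ (K' (insert (f u) D)).card
            then insert u (K' (insert (f u) D))
            else insert v (K' D))
        else
          (if (K' (insert (f u) S)).card ≤ (K' S).card then K' S else K' (insert (f u) S))
        with hKnew
      have hKfu : ∀ S : Finset ℕ, f u ∈ S → Knew S = ∅ := by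
        intro S h; simp only [hKnew]; rw [if_pos h]
      have hKD : Knew D = (if (K' D).card ≤ (K' (insert (f u) D)).card
            then insert u (K' (insert (f u) D))
            else insert v (K' D)) := by
        simp only [hKnew]; rw [if_neg hfuD]; simp
      have hKS : ∀ S : Finset ℕ, f u ∉ S → S ≠ D →
          Knew S = (if (K' (insert (f u) S)).card ≤ (K' S).card
            then K' S else K' (insert (f u) S)) := by
        intro S h0 h1; simp only [hKnew]; rw [if_neg h0, if_neg h1]
      have hufib : Θ.filter (fun θ => θ < f u) = D := hD.symm
      have hvfib : Θ.filter (fun θ => θ < f v) = D := by rw [← hfibuv, hD]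
      have hu' : u ∉ K' (insert (f u) D) := fun h => huW (fact1 D hfuD u h).1
      have hv' : v ∉ K' D := fun h => hvWn (fact2 D hfuD v h).1
      refine ⟨Knew, ?_, ?_, ?_⟩
      · -- membership and fibers
        intro S x hx
        by_cases h0 : f u ∈ S
        · rw [hKfu S h0] at hx
          exact absurd hx (Finset.notMem_empty x)
        by_cases h1 : S = D
        · subst h1
          rw [hKD] at hx
          by_cases h2 : (K' D).card ≤ (K' (insert (f u) D)).card
          · rw [if_pos h2, Finset.mem_insert] at hx
            rcases hx with rfl | hx
            · exact ⟨hK₀M hu, hufib⟩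
            · obtain ⟨hxW, _, hxfib⟩ := fact1 D hfuD x hx
              exact ⟨hWM hxW, hxfib⟩
          · rw [if_neg h2, Finset.mem_insert] at hx
            rcases hx with rfl | hx
            · exact ⟨hK₀M hv, hvfib⟩
            · obtain ⟨hxW, _, hxfib⟩ := fact2 D hfuD x hx
              exact ⟨hWM hxW, hxfib⟩
        · rw [hKS S h0 h1] at hx
          by_cases h2 : (K' (insert (f u) S)).card ≤ (K' S).card
          · rw [if_pos h2] at hx
            obtain ⟨hxW, _, hxfib⟩ := fact2 S h0 x hx
            exact ⟨hWM hxW, hxfib⟩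
          · rw [if_neg h2] at hx
            obtain ⟨hxW, _, hxfib⟩ := fact1 S h0 x hx
            exact ⟨hWM hxW, hxfib⟩
      · -- cliques
        intro S
        by_cases h0 : f u ∈ S
        · rw [hKfu S h0]; simp
        by_cases h1 : S = D
        · subst h1
          rw [hKD]
          by_cases h2 : (K' D).card ≤ (K' (insert (f u) D)).card
          · rw [if_pos h2, Finset.coe_insert]
            refine (hK'clq _).insert ?_
            intro b hb _
            obtain ⟨hbW, hlt, _⟩ := fact1 D hfuD b hb
            exact Or.inl (And.intro hlt (hWu b hbW))
          · rw [if_neg h2, Finset.coe_insert]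
            refine (hK'clq _).insert ?_
            intro b hb _
            obtain ⟨hbW, hnlt, _⟩ := fact2 D hfuD b hb
            exact Or.inr (And.intro (lt_of_le_of_lt (Nat.le_of_not_lt hnlt) hful) (hvW b hbW))
        · rw [hKS S h0 h1]
          by_cases h2 : (K' (insert (f u) S)).card ≤ (K' S).card
          · rw [if_pos h2]; exact hK'clq _
          · rw [if_neg h2]; exact hK'clq _
      · -- the sum
        have hper : ∀ S ∈ Θ.powerset,
            (2 ^ (K' S).card - 1) + (2 ^ (K' (insert (f u) S)).card - 1)
              + (if S = D then 1 else 0) ≤ 2 ^ (Knew S).card - 1 := by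
          intro S hS
          have hSsub := Finset.mem_powerset.mp hS
          have h0 : f u ∉ S := fun h => hfuΘ (hSsub h)
          by_cases h1 : S = D
          · rw [if_pos h1, h1, hKD]
            have e2 : (1:ℕ) ≤ 2 ^ (K' D).card := Nat.one_le_two_pow
            have e3 : (1:ℕ) ≤ 2 ^ (K' (insert (f u) D)).card := Nat.one_le_two_pow
            by_cases h2 : (K' D).card ≤ (K' (insert (f u) D)).card
            · rw [if_pos h2, Finset.card_insert_of_notMem hu']
              have e1 : (2:ℕ) ^ (K' D).card ≤ 2 ^ (K' (insert (f u) D)).card :=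
                Nat.pow_le_pow_right (by norm_num) h2
              have e4 : (2:ℕ) ^ ((K' (insert (f u) D)).card + 1)
                  = 2 ^ (K' (insert (f u) D)).card * 2 := pow_succ _ _
              omega
            · rw [if_neg h2, Finset.card_insert_of_notMem hv']
              have e1 : (2:ℕ) ^ (K' (insert (f u) D)).card ≤ 2 ^ (K' D).card :=
                Nat.pow_le_pow_right (by norm_num) (Nat.le_of_not_le h2)
              have e4 : (2:ℕ) ^ ((K' D).card + 1) = 2 ^ (K' D).card * 2 := pow_succ _ _
              omega
          · rw [if_neg h1, hKS S h0 h1]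
            have hdisj : K' S = ∅ ∨ K' (insert (f u) S) = ∅ := by
              by_contra hcon
              push_neg at hcon
              obtain ⟨y, hy⟩ := hcon.1
              obtain ⟨x, hx⟩ := hcon.2
              obtain ⟨hyW, hynlt, hyfib⟩ := fact2 S h0 y hy
              obtain ⟨hxW, hxlt, hxfib⟩ := fact1 S h0 x hx
              have hDS : D ⊆ S := by
                intro θ hθ
                rw [hD, Finset.mem_filter] at hθ
                rw [← hxfib]
                exact Finset.mem_filter.mpr ⟨hθ.1, lt_trans hθ.2 hxlt⟩
              obtain ⟨θ, hθS, hθD⟩ := Finset.exists_of_ssubset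
                (Finset.ssubset_iff_subset_ne.mpr ⟨hDS, fun h => h1 h.symm⟩)
              have hθy : θ < f y := by
                have h5 : θ ∈ Θ.filter (fun θ => θ < f y) := by rw [hyfib]; exact hθS
                exact (Finset.mem_filter.mp h5).2
              exact hθD (by
                rw [hD]
                exact Finset.mem_filter.mpr ⟨hSsub hθS,
                  lt_of_lt_of_le hθy (Nat.le_of_not_lt hynlt)⟩)
            by_cases h2 : (K' (insert (f u) S)).card ≤ (K' S).card
            · rw [if_pos h2]
              have ha : (2:ℕ) ^ (K' (insert (f u) S)).card = 1 := by
                rcases hdisj with he | he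
                · have : (K' S).card = 0 := by rw [he]; rfl
                  have h6 : (K' (insert (f u) S)).card = 0 := by omega
                  rw [h6]; rfl
                · rw [he]; rfl
              omega
            · rw [if_neg h2]
              have hb : (2:ℕ) ^ (K' S).card = 1 := by
                rcases hdisj with he | he
                · rw [he]; rfl
                · have : (K' (insert (f u) S)).card = 0 := by rw [he]; rfl
                  omega
              omega
        have hs1 := Finset.sum_le_sum hper
        have hs2 : ∑ S ∈ Θ.powerset,
            ((2 ^ (K' S).card - 1) + (2 ^ (K' (insert (f u) S)).card - 1)
              + (if S = D then 1 else 0))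
            = (∑ S ∈ (insert (f u) Θ).powerset, (2 ^ (K' S).card - 1)) + 1 := by
          rw [Finset.sum_add_distrib, Finset.sum_add_distrib,
            Finset.sum_ite_eq' Θ.powerset D (fun _ => 1), if_pos hDmem,
            Finset.sum_powerset_insert hfuΘ]
        omega
    · -- case B : each cell of the heavy clique is a backedge clique
      have hfin : K₀.Finite := Set.toFinite K₀
      refine ⟨fun S => hfin.toFinset.filter (fun x => Θ.filter (fun θ => θ < f x) = S),
        ?_, ?_, ?_⟩
      · intro S x hx
        rw [Finset.mem_filter, Set.Finite.mem_toFinset] at hx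
        exact ⟨hK₀M hx.1, hx.2⟩
      · intro S x hx y hy hxy
        rw [Finset.mem_coe, Finset.mem_filter, Set.Finite.mem_toFinset] at hx hy
        have hfxy : f x ≠ f y := fun h => hxy (hf h)
        rcases Nat.lt_or_ge (f x) (f y) with hlt | hge
        · have hnarc : ¬ T.arc x y := fun harc =>
            hA ⟨x, hx.1, y, hy.1, harc, hlt, hx.2.trans hy.2.symm⟩
          exact Or.inl (And.intro hlt ((T.anti y x (Ne.symm hxy)).mpr hnarc))
        · have hlt : f y < f x := lt_of_le_of_ne hge (Ne.symm hfxy)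
          have hnarc : ¬ T.arc y x := fun harc =>
            hA ⟨y, hy.1, x, hx.1, harc, hlt, hy.2.trans hx.2.symm⟩
          exact Or.inr (And.intro hlt ((T.anti x y hxy).mpr hnarc))
      · dsimp only
        have hcard : hfin.toFinset.card = n + 2 := by
          rw [← Set.ncard_eq_toFinset_card _ hfin, hK₀card]
        have h1 : hfin.toFinset.card = ∑ S ∈ Θ.powerset,
            (hfin.toFinset.filter (fun x => Θ.filter (fun θ => θ < f x) = S)).card :=
          Finset.card_eq_sum_card_fiberwise
            (fun x _ => Finset.mem_powerset.mpr (Finset.filter_subset _ _))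
        have h2 : ∑ S ∈ Θ.powerset,
              (hfin.toFinset.filter (fun x => Θ.filter (fun θ => θ < f x) = S)).card
            ≤ ∑ S ∈ Θ.powerset, (2 ^ (hfin.toFinset.filter
              (fun x => Θ.filter (fun θ => θ < f x) = S)).card - 1) := by
          refine Finset.sum_le_sum ?_
          intro S _
          have := Nat.lt_two_pow_self (n := (hfin.toFinset.filter
            (fun x => Θ.filter (fun θ => θ < f x) = S)).card)
          omega
        omega


open Tournament in
/-- Lemma (mountains force big clique number): if a tournament `T` contains an
`r`-mountain with `r > 0`, then `ω⃗(T) ≥ ⌊log₂ r⌋`. -/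
theorem stmt_8 {V : Type} [Fintype V] (T : Tournament V) (r : ℕ) (hr : 0 < r)
    (M : Set V) (hM : T.IsMtn r M) :
    Nat.log 2 r ≤ T.cliqueNum := by
  have key : ∀ g : V → ℕ, Function.Injective g → Nat.log 2 r ≤ (T.backedge g).cliqueNum := by
    intro g hg
    obtain ⟨n, rfl⟩ : ∃ n, r = n + 1 := ⟨r - 1, by omega⟩
    obtain ⟨K, hmem, hclq, hsum⟩ := mountain_cell_sum T g hg n M hM ∅
    rw [Finset.powerset_empty, Finset.sum_singleton] at hsum
    have h1 : n + 1 < 2 ^ (K ∅).card := by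
      have := Nat.one_le_two_pow (n := (K ∅).card)
      omega
    have hlog : Nat.log 2 (n + 1) < (K ∅).card := by
      by_contra h
      push_neg at h
      have h2 : (2:ℕ) ^ Nat.log 2 (n + 1) ≤ n + 1 := Nat.pow_log_le_self 2 (by omega)
      have h3 : (2:ℕ) ^ (K ∅).card ≤ 2 ^ Nat.log 2 (n + 1) :=
        Nat.pow_le_pow_right (by norm_num) h
      omega
    have hcl : (K ∅).card ≤ (T.backedge g).cliqueNum := by
      apply le_csSup
      · refine ⟨Fintype.card V, ?_⟩
        rintro m ⟨s, hs⟩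
        rw [← hs.2]
        exact Finset.card_le_univ s
      · exact ⟨K ∅, hclq ∅, rfl⟩
    omega
  apply le_csInf
  · refine ⟨(T.backedge (fun v => ((Fintype.equivFin V) v : ℕ))).cliqueNum,
      fun v => ((Fintype.equivFin V) v : ℕ), ?_, rfl⟩
    exact Fin.val_injective.comp (Fintype.equivFin V).injective
  · rintro b ⟨g, hg, rfl⟩
    exact key g hg
end

section
/- Let f : ℕ → ℕ be a nondecreasing function, let c ∈ ℕ, and let Q be a tournament. Then there exists a constant C, depending only on f, c, and |V(Q)|, such that for every tournament T one of the following holds: (a) ω⃗(T) < C; (b) T contains a copy of Q; or (c) there exist an integer x ≥ c and disjoint sets A, B ⊆ V(T) with ω⃗(A) = ω⃗(B) = f(x) such that either every vertex v ∈ A satisfies ω⃗(N^−(v) ∩ B) < x, or every vertex v ∈ A satisfies ω⃗(N^+(v) ∩ B) < x. -/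
/-! ### Auxiliary development for `stmt_11` -/

section Stmt11Aux

open Function

attribute [local instance] Classical.propDecidable

namespace Stmt11

/-- Bound a graph clique number by bounding all clique sizes. -/
lemma graph_cliqueNum_le {α : Type} {G : SimpleGraph α} {M : ℕ}
    (h : ∀ (n : ℕ) (s : Finset α), G.IsNClique n s → n ≤ M) : G.cliqueNum ≤ M := by
  have h0 : {n : ℕ | ∃ s, G.IsNClique n s}.Nonempty := ⟨0, ⟨∅, by simp⟩⟩
  have h1 : ∀ b ∈ {n : ℕ | ∃ s, G.IsNClique n s}, b ≤ M := by
    rintro n ⟨s, hs⟩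
    exact h n s hs
  exact csSup_le h0 h1

/-- Transfer a clique through an adjacency-preserving map. -/
lemma clique_card_le_cliqueNum {α β : Type} [Fintype β] {G : SimpleGraph α}
    {H : SimpleGraph β} {s : Finset α} (hs : G.IsClique (s : Set α)) (e : α → β)
    (he : Set.InjOn e (s : Set α))
    (hadj : ∀ a ∈ s, ∀ b ∈ s, a ≠ b → G.Adj a b → H.Adj (e a) (e b)) :
    s.card ≤ H.cliqueNum := by
  have himage : H.IsClique ((s.image e : Finset β) : Set β) := by
    intro x hx y hy hxy
    simp only [Finset.coe_image, Set.mem_image, Finset.mem_coe] at hx hy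
    obtain ⟨a, ha, rfl⟩ := hx
    obtain ⟨b, hb, rfl⟩ := hy
    have hab : a ≠ b := by rintro rfl; exact hxy rfl
    exact hadj a ha b hb hab (hs ha hb hab)
  have hcard : (s.image e).card = s.card := Finset.card_image_of_injOn he
  calc s.card = (s.image e).card := hcard.symm
    _ ≤ H.cliqueNum := SimpleGraph.IsClique.card_le_cliqueNum (tc := himage)

/-- There is an ordering realizing the tournament clique number. -/
lemma exists_min_ordering {α : Type} [Countable α] (T : Tournament α) :
    ∃ f : α → ℕ, Injective f ∧ (T.backedge f).cliqueNum = T.cliqueNum := by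
  have hne : {n | ∃ f : α → ℕ, Injective f ∧ (T.backedge f).cliqueNum = n}.Nonempty := by
    obtain ⟨f, hf⟩ := Countable.exists_injective_nat α
    exact ⟨(T.backedge f).cliqueNum, f, hf, rfl⟩
  exact Nat.sInf_mem hne

lemma cliqueNum_le_ordering {α : Type} (T : Tournament α) {f : α → ℕ} (hf : Injective f) :
    T.cliqueNum ≤ (T.backedge f).cliqueNum :=
  Nat.sInf_le ⟨f, hf, rfl⟩

variable {V : Type} [Fintype V] (T : Tournament V)

/-- The clique number of a set is at most its cardinality. -/
lemma cliqueNumOn_le_ncard (X : Set V) : T.cliqueNumOn X ≤ X.ncard := by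
  obtain ⟨f, hf, heq⟩ := exists_min_ordering (T.restrict X)
  rw [Tournament.cliqueNumOn, ← heq]
  apply graph_cliqueNum_le
  intro n s hs
  have h1 : n = s.card := hs.card_eq.symm
  have h2 : s.card ≤ Fintype.card ↥X := Finset.card_le_univ s
  have h3 : X.ncard = Fintype.card ↥X := by
    rw [Set.ncard_eq_toFinset_card', Set.toFinset_card]
  omega

lemma cliqueNumOn_empty : T.cliqueNumOn (∅ : Set V) = 0 := by
  have := cliqueNumOn_le_ncard T (∅ : Set V)
  simpa using this

/-- Monotonicity of the clique number under subsets. -/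
lemma cliqueNumOn_mono {X Y : Set V} (h : X ⊆ Y) : T.cliqueNumOn X ≤ T.cliqueNumOn Y := by
  obtain ⟨g, hg, hgeq⟩ := exists_min_ordering (T.restrict Y)
  have h1 : T.cliqueNumOn X ≤
      ((T.restrict X).backedge (fun u => g (Set.inclusion h u))).cliqueNum :=
    cliqueNum_le_ordering _ (hg.comp (Set.inclusion_injective h))
  refine h1.trans ?_
  rw [Tournament.cliqueNumOn, ← hgeq] at *
  apply graph_cliqueNum_le
  intro n s hs
  rw [← hs.card_eq]
  exact clique_card_le_cliqueNum hs.isClique (Set.inclusion h)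
    ((Set.inclusion_injective h).injOn)
    (fun a _ b _ _ hadj => hadj)

/-- Subadditivity of the clique number under unions. -/
lemma cliqueNumOn_union_le (X Y : Set V) :
    T.cliqueNumOn (X ∪ Y) ≤ T.cliqueNumOn X + T.cliqueNumOn Y := by
  rcases X.eq_empty_or_nonempty with rfl | ⟨x0, hx0⟩
  · rw [Set.empty_union]; omega
  rcases Y.eq_empty_or_nonempty with rfl | ⟨y0, hy0⟩
  · rw [Set.union_empty]; omega
  obtain ⟨fX, hfX, hfXeq⟩ := exists_min_ordering (T.restrict X)
  obtain ⟨fY, hfY, hfYeq⟩ := exists_min_ordering (T.restrict Y)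
  set g : ↥(X ∪ Y) → ℕ := fun u =>
    if h : u.1 ∈ X then 2 * fX ⟨u.1, h⟩ else 2 * fY ⟨u.1, u.2.resolve_left h⟩ + 1 with hgdef
  have hg : Injective g := by
    intro u w huw
    simp only [hgdef] at huw
    by_cases hu : u.1 ∈ X <;> by_cases hw : w.1 ∈ X
    · rw [dif_pos hu, dif_pos hw] at huw
      have : fX ⟨u.1, hu⟩ = fX ⟨w.1, hw⟩ := by omega
      have := congrArg Subtype.val (hfX this)
      exact Subtype.ext this
    · rw [dif_pos hu, dif_neg hw] at huw; omega
    · rw [dif_neg hu, dif_pos hw] at huw; omega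
    · rw [dif_neg hu, dif_neg hw] at huw
      have : fY ⟨u.1, u.2.resolve_left hu⟩ = fY ⟨w.1, w.2.resolve_left hw⟩ := by omega
      have := congrArg Subtype.val (hfY this)
      exact Subtype.ext this
  have h0 : T.cliqueNumOn (X ∪ Y) ≤ ((T.restrict (X ∪ Y)).backedge g).cliqueNum :=
    cliqueNum_le_ordering _ hg
  refine h0.trans ?_
  apply graph_cliqueNum_le
  intro n s hs
  rw [← hs.card_eq]
  have hsplit := Finset.card_filter_add_card_filter_not
    (s := s) (p := fun u => u.1 ∈ X)
  have h1 : (s.filter (fun u => u.1 ∈ X)).card ≤ T.cliqueNumOn X := by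
    rw [Tournament.cliqueNumOn, ← hfXeq]
    refine clique_card_le_cliqueNum
      (hs.isClique.subset (by exact_mod_cast Finset.filter_subset _ s))
      (fun u => if h : u.1 ∈ X then (⟨u.1, h⟩ : ↥X) else ⟨x0, hx0⟩) ?_ ?_
    · intro u hu w hw huw
      simp only [Finset.coe_filter, Set.mem_setOf_eq] at hu hw
      simp only [dif_pos hu.2, dif_pos hw.2] at huw
      exact Subtype.ext (congrArg (Subtype.val : ↥X → V) huw)
    · intro a ha b hb hab hadj
      simp only [Finset.mem_filter] at ha hb
      simp only [dif_pos ha.2, dif_pos hb.2]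
      have hga : g a = 2 * fX ⟨a.1, ha.2⟩ := by simp only [hgdef]; rw [dif_pos ha.2]
      have hgb : g b = 2 * fX ⟨b.1, hb.2⟩ := by simp only [hgdef]; rw [dif_pos hb.2]
      rcases hadj with ⟨hlt, harc⟩ | ⟨hlt, harc⟩
      · refine Or.inl ⟨?_, harc⟩
        rw [hga, hgb] at hlt; omega
      · refine Or.inr ⟨?_, harc⟩
        rw [hga, hgb] at hlt; omega
  have h2 : (s.filter (fun u => ¬ u.1 ∈ X)).card ≤ T.cliqueNumOn Y := by
    rw [Tournament.cliqueNumOn, ← hfYeq]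
    refine clique_card_le_cliqueNum
      (hs.isClique.subset (by exact_mod_cast Finset.filter_subset _ s))
      (fun u => if h : u.1 ∈ X then ⟨y0, hy0⟩ else (⟨u.1, u.2.resolve_left h⟩ : ↥Y)) ?_ ?_
    · intro u hu w hw huw
      simp only [Finset.coe_filter, Set.mem_setOf_eq] at hu hw
      simp only [dif_neg hu.2, dif_neg hw.2] at huw
      exact Subtype.ext (congrArg (Subtype.val : ↥Y → V) huw)
    · intro a ha b hb hab hadj
      simp only [Finset.mem_filter] at ha hb
      simp only [dif_neg ha.2, dif_neg hb.2]
      have hga : g a = 2 * fY ⟨a.1, a.2.resolve_left ha.2⟩ + 1 := by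
        simp only [hgdef]; rw [dif_neg ha.2]
      have hgb : g b = 2 * fY ⟨b.1, b.2.resolve_left hb.2⟩ + 1 := by
        simp only [hgdef]; rw [dif_neg hb.2]
      rcases hadj with ⟨hlt, harc⟩ | ⟨hlt, harc⟩
      · refine Or.inl ⟨?_, harc⟩
        rw [hga, hgb] at hlt; omega
      · refine Or.inr ⟨?_, harc⟩
        rw [hga, hgb] at hlt; omega
  omega

lemma cliqueNumOn_le_diff_singleton (X : Set V) (v : V) :
    T.cliqueNumOn X ≤ T.cliqueNumOn (X \ {v}) + 1 := by
  have h1 : X ⊆ (X \ {v}) ∪ {v} := by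
    intro u hu
    by_cases h : u = v
    · exact Or.inr h
    · exact Or.inl ⟨hu, h⟩
  have h2 := (cliqueNumOn_mono T h1).trans (cliqueNumOn_union_le T (X \ {v}) {v})
  have h3 : T.cliqueNumOn ({v} : Set V) ≤ 1 := by
    have := cliqueNumOn_le_ncard T ({v} : Set V)
    simpa using this
  omega

/-- Downward intermediate value: any clique number value below that of `X`
is attained on a subset of `X`. -/
lemma exists_subset_cliqueNumOn_eq :
    ∀ (n : ℕ) (X : Set V), X.ncard = n → ∀ k, k ≤ T.cliqueNumOn X →
      ∃ A, A ⊆ X ∧ T.cliqueNumOn A = k := by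
  intro n
  induction n using Nat.strong_induction_on with
  | _ n IH =>
    intro X hX k hk
    rcases eq_or_lt_of_le hk with heq | hlt
    · exact ⟨X, subset_rfl, heq.symm⟩
    · have hXne : X.Nonempty := by
        by_contra h
        rw [Set.not_nonempty_iff_eq_empty] at h
        subst h
        rw [cliqueNumOn_empty] at hlt
        omega
      obtain ⟨v, hv⟩ := hXne
      have hcard : (X \ {v}).ncard < n := by
        subst hX
        exact Set.ncard_diff_singleton_lt_of_mem hv (Set.toFinite X)
      have hk' : k ≤ T.cliqueNumOn (X \ {v}) := by
        have := cliqueNumOn_le_diff_singleton T X v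
        omega
      obtain ⟨A, hA1, hA2⟩ := IH _ hcard (X \ {v}) rfl k hk'
      exact ⟨A, hA1.trans Set.diff_subset, hA2⟩

lemma cliqueNumOn_shrink {X : Set V} {k : ℕ} (hk : k ≤ T.cliqueNumOn X) :
    ∃ A, A ⊆ X ∧ T.cliqueNumOn A = k :=
  exists_subset_cliqueNumOn_eq T X.ncard X rfl k hk

lemma cliqueNumOn_biUnion_le {ι : Type} (s : Finset ι) (F : ι → Set V) :
    T.cliqueNumOn (⋃ i ∈ s, F i) ≤ ∑ i ∈ s, T.cliqueNumOn (F i) := by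
  classical
  induction s using Finset.induction_on with
  | empty => simp [cliqueNumOn_empty]
  | insert a s' h ih =>
    rw [Finset.set_biUnion_insert, Finset.sum_insert h]
    exact (cliqueNumOn_union_le T _ _).trans (by omega)

lemma cliqueNumOn_univ : T.cliqueNumOn (Set.univ : Set V) = T.cliqueNum := by
  apply le_antisymm
  · obtain ⟨g, hg, hgeq⟩ := exists_min_ordering T
    have h1 : T.cliqueNumOn (Set.univ : Set V) ≤
        ((T.restrict Set.univ).backedge (fun u => g u.1)).cliqueNum :=
      cliqueNum_le_ordering _ (fun a b h => Subtype.ext (hg h))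
    refine h1.trans ?_
    rw [← hgeq]
    apply graph_cliqueNum_le
    intro n s hs
    rw [← hs.card_eq]
    exact clique_card_le_cliqueNum hs.isClique (fun u => u.1)
      (Subtype.val_injective.injOn)
      (fun a _ b _ _ hadj => hadj)
  · obtain ⟨g, hg, hgeq⟩ := exists_min_ordering (T.restrict (Set.univ : Set V))
    have h1 : T.cliqueNum ≤
        (T.backedge (fun v => g ⟨v, Set.mem_univ v⟩)).cliqueNum :=
      cliqueNum_le_ordering _ (fun a b h => by
        have := hg h
        exact congrArg Subtype.val this)
    refine h1.trans ?_
    rw [Tournament.cliqueNumOn, ← hgeq]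
    apply graph_cliqueNum_le
    intro n s hs
    rw [← hs.card_eq]
    exact clique_card_le_cliqueNum hs.isClique
      (fun v => (⟨v, Set.mem_univ v⟩ : ↥(Set.univ : Set V)))
      (fun a _ b _ h => congrArg Subtype.val h)
      (fun a _ b _ _ hadj => hadj)

/-- The "outcome (c)" of the theorem. -/
def GOutcome (f : ℕ → ℕ) (c : ℕ) {V : Type} (T : Tournament V) : Prop :=
  ∃ x : ℕ, c ≤ x ∧ ∃ A B : Set V, Disjoint A B ∧
    T.cliqueNumOn A = f x ∧ T.cliqueNumOn B = f x ∧
    ((∀ v ∈ A, T.cliqueNumOn (T.inN v ∩ B) < x) ∨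
     (∀ v ∈ A, T.cliqueNumOn (T.outN v ∩ B) < x))

/-- The recursively-defined constants. -/
def Cfun (f : ℕ → ℕ) (c : ℕ) : ℕ → ℕ → ℕ
  | 0, _ => 1
  | j+1, r => (f (max (c+1) (Cfun f c j (2*r))) + 1) * (2*r+1) + 1

/-- The main induction: given pairwise disjoint sets of large clique number, either
outcome (c) holds, or any pattern tournament on `Fin j` embeds with vertices in
prescribed sets. -/
theorem main (f : ℕ → ℕ) (c : ℕ) {V : Type} [Fintype V] (T : Tournament V) :
    ∀ (j : ℕ) (ι : Type) [Fintype ι] (S : ι → Set V),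
      (∀ i l : ι, i ≠ l → Disjoint (S i) (S l)) →
      (∀ l, Cfun f c j (Fintype.card ι) ≤ T.cliqueNumOn (S l)) →
      GOutcome f c T ∨
      ∀ (P : Tournament (Fin j)) (σ : Fin j → ι),
        ∃ φ : Fin j → V, Function.Injective φ ∧ (∀ a, φ a ∈ S (σ a)) ∧
          ∀ a b, P.arc a b → T.arc (φ a) (φ b) := by
  intro j
  induction j with
  | zero =>
    intro ι _ S _ _
    right
    intro P σ
    exact ⟨Fin.elim0, fun a => a.elim0, fun a => a.elim0, fun a => a.elim0⟩
  | succ j IH =>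
    intro ι instι S hdisj hω
    by_cases hno : GOutcome f c T
    · exact Or.inl hno
    right
    set r := Fintype.card ι with hr
    set x := max (c+1) (Cfun f c j (2*r)) with hxdef
    set k := f x with hkdef
    have hCeq : Cfun f c (j+1) r = (k+1) * (2*r+1) + 1 := rfl
    have hCexp : (k+1) * (2*r+1) = r * (2*k) + k + 2*r + 1 := by ring
    -- carve the bags
    have hBex : ∀ l : ι, ∃ B, B ⊆ S l ∧ T.cliqueNumOn B = k := by
      intro l
      apply cliqueNumOn_shrink
      have h1 := hω l
      have h2 : k ≤ Cfun f c (j+1) r := by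
        rw [hCeq]
        calc k ≤ k + 1 := Nat.le_succ k
          _ ≤ (k+1) * (2*r+1) := Nat.le_mul_of_pos_right _ (by omega)
          _ ≤ (k+1) * (2*r+1) + 1 := Nat.le_succ _
      omega
    choose B hBsub hBeq using hBex
    -- light sets
    set Lin : ι → Set V := fun l =>
      {u : V | u ∉ B l ∧ T.cliqueNumOn (T.inN u ∩ B l) < x} with hLindef
    set Lout : ι → Set V := fun l =>
      {u : V | u ∉ B l ∧ T.cliqueNumOn (T.outN u ∩ B l) < x} with hLoutdef
    have hxc : c ≤ x := le_trans (Nat.le_succ c) (le_max_left _ _)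
    have hLin : ∀ l, T.cliqueNumOn (Lin l) ≤ k := by
      intro l
      by_contra h
      push_neg at h
      obtain ⟨A, hA, hAeq⟩ := cliqueNumOn_shrink T (le_of_lt h)
      exact hno ⟨x, hxc, A, B l,
        Set.disjoint_left.2 (fun a ha hb => (hA ha).1 hb), hAeq, hBeq l,
        Or.inl (fun v hv => (hA hv).2)⟩
    have hLout : ∀ l, T.cliqueNumOn (Lout l) ≤ k := by
      intro l
      by_contra h
      push_neg at h
      obtain ⟨A, hA, hAeq⟩ := cliqueNumOn_shrink T (le_of_lt h)
      exact hno ⟨x, hxc, A, B l,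
        Set.disjoint_left.2 (fun a ha hb => (hA ha).1 hb), hAeq, hBeq l,
        Or.inr (fun v hv => (hA hv).2)⟩
    -- produce the special vertices
    have hvex : ∀ i : ι, ∃ v, v ∈ S i ∧ (∀ l, v ∉ B l) ∧
        (∀ l, x ≤ T.cliqueNumOn (T.inN v ∩ B l)) ∧
        (∀ l, x ≤ T.cliqueNumOn (T.outN v ∩ B l)) := by
      intro i
      set Z : Set V := B i ∪ ⋃ l, (Lin l ∪ Lout l) with hZdef
      have hZle : T.cliqueNumOn Z ≤ k + r * (2*k) := by
        refine (cliqueNumOn_union_le T _ _).trans ?_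
        have h4 : T.cliqueNumOn (⋃ l, (Lin l ∪ Lout l)) ≤ r * (2*k) := by
          have he : (⋃ l, (Lin l ∪ Lout l)) = ⋃ l ∈ (Finset.univ : Finset ι), (Lin l ∪ Lout l) := by
            simp
          rw [he]
          refine (cliqueNumOn_biUnion_le T _ _).trans ?_
          have h5 : ∀ l ∈ (Finset.univ : Finset ι),
              T.cliqueNumOn (Lin l ∪ Lout l) ≤ 2*k := by
            intro l _
            have h6 := (cliqueNumOn_union_le T (Lin l) (Lout l))
            have h7 := hLin l
            have h8 := hLout l
            omega
          calc ∑ l ∈ Finset.univ, T.cliqueNumOn (Lin l ∪ Lout l)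
              ≤ ∑ _l ∈ (Finset.univ : Finset ι), 2*k := Finset.sum_le_sum h5
            _ = r * (2*k) := by rw [Finset.sum_const, smul_eq_mul, Finset.card_univ]
        have h9 := hBeq i
        omega
      have hcover : T.cliqueNumOn (S i) ≤ T.cliqueNumOn (S i \ Z) + (k + r * (2*k)) := by
        have h1 : S i ⊆ (S i \ Z) ∪ Z := by
          intro u hu
          by_cases h : u ∈ Z
          · exact Or.inr h
          · exact Or.inl ⟨hu, h⟩
        have h2 := (cliqueNumOn_mono T h1).trans (cliqueNumOn_union_le T (S i \ Z) Z)
        omega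
      have hHω : 1 ≤ T.cliqueNumOn (S i \ Z) := by
        have h6 := hω i
        rw [hCeq] at h6
        omega
      have hHne : (S i \ Z).Nonempty := by
        by_contra h
        rw [Set.not_nonempty_iff_eq_empty] at h
        rw [h, cliqueNumOn_empty] at hHω
        omega
      obtain ⟨v, hvS, hvZ⟩ := hHne
      have hvBi : v ∉ B i := fun h => hvZ (Or.inl h)
      have hvL : ∀ l, v ∉ Lin l ∧ v ∉ Lout l := by
        intro l
        constructor
        · intro h
          exact hvZ (Or.inr (Set.mem_iUnion.2 ⟨l, Or.inl h⟩))
        · intro h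
          exact hvZ (Or.inr (Set.mem_iUnion.2 ⟨l, Or.inr h⟩))
      have hvB : ∀ l, v ∉ B l := by
        intro l hl
        by_cases h : l = i
        · exact hvBi (h ▸ hl)
        · exact Set.disjoint_left.1 (hdisj l i h) (hBsub l hl) hvS
      refine ⟨v, hvS, hvB, ?_, ?_⟩
      · intro l
        by_contra h
        push_neg at h
        exact (hvL l).1 ⟨hvB l, h⟩
      · intro l
        by_contra h
        push_neg at h
        exact (hvL l).2 ⟨hvB l, h⟩
    choose vv hv1 hv2 hv3 hv4 using hvex
    -- apply the induction hypothesis to the traces of each special vertex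
    have hEmb : ∀ i : ι, ∀ (P' : Tournament (Fin j)) (σ' : Fin j → ι × Bool),
        ∃ φ : Fin j → V, Function.Injective φ ∧
          (∀ a, φ a ∈ (if (σ' a).2 then T.inN (vv i) else T.outN (vv i)) ∩ B (σ' a).1) ∧
          ∀ a b, P'.arc a b → T.arc (φ a) (φ b) := by
      intro i
      set S' : ι × Bool → Set V :=
        fun p => (if p.2 then T.inN (vv i) else T.outN (vv i)) ∩ B p.1 with hS'def
      have hdisj' : ∀ p q : ι × Bool, p ≠ q → Disjoint (S' p) (S' q) := by
        rintro ⟨l, b⟩ ⟨l', b'⟩ hpq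
        by_cases hll : l = l'
        · subst hll
          have hbb : b ≠ b' := by
            intro h
            exact hpq (by rw [h])
          rw [Set.disjoint_left]
          intro u hu hu'
          have hub : u ∈ B l := hu.2
          have hune : u ≠ vv i := fun h => (hv2 i l) (h ▸ hub)
          cases b <;> cases b'
          · exact hbb rfl
          · have h1 : T.arc (vv i) u := by simpa [hS'def, Tournament.outN] using hu.1
            have h2 : T.arc u (vv i) := by simpa [hS'def, Tournament.inN] using hu'.1
            exact ((T.anti u (vv i) hune).1 h2) h1
          · have h1 : T.arc u (vv i) := by simpa [hS'def, Tournament.inN] using hu.1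
            have h2 : T.arc (vv i) u := by simpa [hS'def, Tournament.outN] using hu'.1
            exact ((T.anti u (vv i) hune).1 h1) h2
          · exact hbb rfl
        · exact (hdisj l l' hll).mono
            ((Set.inter_subset_right).trans (hBsub l))
            ((Set.inter_subset_right).trans (hBsub l'))
      have hω' : ∀ p, Cfun f c j (Fintype.card (ι × Bool)) ≤ T.cliqueNumOn (S' p) := by
        rintro ⟨l, b⟩
        have hcard : Fintype.card (ι × Bool) = 2*r := by
          rw [Fintype.card_prod, Fintype.card_bool, hr]
          ring
        rw [hcard]
        have hlex : Cfun f c j (2*r) ≤ x := le_max_right _ _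
        cases b
        · exact le_trans hlex (by simpa [hS'def] using hv4 i l)
        · exact le_trans hlex (by simpa [hS'def] using hv3 i l)
      rcases IH (ι × Bool) S' hdisj' hω' with h | h
      · exact absurd h hno
      · exact h
    -- final embedding
    intro P σ
    set i := σ (Fin.last j) with hidef
    set v := vv i with hvdef
    set P' : Tournament (Fin j) :=
      ⟨fun a b => P.arc a.castSucc b.castSucc,
       fun a h => P.loopless _ h,
       fun a b h => P.anti _ _ (fun e => h (Fin.castSucc_injective _ e))⟩ with hP'def
    set σ' : Fin j → ι × Bool :=
      fun a => (σ a.castSucc, if P.arc a.castSucc (Fin.last j) then true else false) with hσ'def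
    obtain ⟨φ', hinj', hmem', harc'⟩ := hEmb i P' σ'
    have hφv : ∀ a, φ' a ≠ v := by
      intro a h
      have h1 := (hmem' a).1
      by_cases hb : (σ' a).2 = true
      · rw [hb, if_pos rfl] at h1
        rw [h] at h1
        exact T.loopless v h1
      · rw [eq_false_of_ne_true hb] at h1
        simp only [Bool.false_eq_true, if_false] at h1
        rw [h] at h1
        exact T.loopless v h1
    refine ⟨Fin.lastCases v φ', ?_, ?_, ?_⟩
    · intro a b hab
      rcases Fin.eq_castSucc_or_eq_last a with ⟨a', rfl⟩ | rfl <;>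
        rcases Fin.eq_castSucc_or_eq_last b with ⟨b', rfl⟩ | rfl
      · simp only [Fin.lastCases_castSucc] at hab
        exact congrArg Fin.castSucc (hinj' hab)
      · simp only [Fin.lastCases_castSucc, Fin.lastCases_last] at hab
        exact absurd hab (hφv a')
      · simp only [Fin.lastCases_castSucc, Fin.lastCases_last] at hab
        exact absurd hab.symm (hφv b')
      · rfl
    · intro a
      rcases Fin.eq_castSucc_or_eq_last a with ⟨a', rfl⟩ | rfl
      · simp only [Fin.lastCases_castSucc]
        have h1 : φ' a' ∈ B (σ a'.castSucc) := (hmem' a').2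
        exact hBsub _ h1
      · simp only [Fin.lastCases_last]
        exact hv1 i
    · intro a b hab
      rcases Fin.eq_castSucc_or_eq_last a with ⟨a', rfl⟩ | rfl <;>
        rcases Fin.eq_castSucc_or_eq_last b with ⟨b', rfl⟩ | rfl
      · simp only [Fin.lastCases_castSucc]
        exact harc' a' b' hab
      · simp only [Fin.lastCases_castSucc, Fin.lastCases_last]
        have h2 : (σ' a').2 = true := by
          simp only [hσ'def]
          rw [if_pos hab]
        have h1 := (hmem' a').1
        rw [h2, if_pos rfl] at h1
        exact h1
      · simp only [Fin.lastCases_castSucc, Fin.lastCases_last]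
        have hlt : b'.castSucc ≠ Fin.last j := (Fin.castSucc_lt_last b').ne
        have hnb : ¬ P.arc b'.castSucc (Fin.last j) :=
          fun h => ((P.anti _ _ hlt).1 h) hab
        have h2 : (σ' b').2 = false := by
          simp only [hσ'def]
          rw [if_neg hnb]
        have h1 := (hmem' b').1
        rw [h2] at h1
        simp only [Bool.false_eq_true, if_false] at h1
        exact h1
      · exact absurd hab (P.loopless _)

end Stmt11

end Stmt11Aux

open Tournament in
/-- Lemma (finding a half-bag-chain): for a nondecreasing `f`, `c ∈ ℕ`, and a bound
`m` on `|V(Q)|`, there is a constant `C` (depending only on `f`, `c` and `m`) such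
that every tournament either has clique number less than `C`, contains a copy of `Q`,
or contains the two sets described in outcome (c). -/
theorem stmt_11 (f : ℕ → ℕ) (hf : Monotone f) (c m : ℕ) :
    ∃ C : ℕ, ∀ (W : Type) [Fintype W] (Q : Tournament W), Fintype.card W = m →
      ∀ (V : Type) [Fintype V] (T : Tournament V),
        T.cliqueNum < C ∨ T.HasCopy Q ∨
        ∃ x : ℕ, c ≤ x ∧ ∃ A B : Set V, Disjoint A B ∧
          T.cliqueNumOn A = f x ∧ T.cliqueNumOn B = f x ∧
          ((∀ v ∈ A, T.cliqueNumOn (T.inN v ∩ B) < x) ∨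
           (∀ v ∈ A, T.cliqueNumOn (T.outN v ∩ B) < x)) := by
    classical
  refine ⟨Stmt11.Cfun f c m 1, ?_⟩
  intro W instW Q hcard V instV T
  by_cases hC : T.cliqueNum < Stmt11.Cfun f c m 1
  · exact Or.inl hC
  by_cases hno : Stmt11.GOutcome f c T
  · exact Or.inr (Or.inr hno)
  have hω : ∀ l : PUnit, Stmt11.Cfun f c m (Fintype.card PUnit) ≤
      T.cliqueNumOn ((fun _ : PUnit => (Set.univ : Set V)) l) := by
    intro l
    have h1 : T.cliqueNumOn (Set.univ : Set V) = T.cliqueNum := Stmt11.cliqueNumOn_univ T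
    have h2 : Fintype.card PUnit = 1 := Fintype.card_punit
    rw [h1, h2]
    omega
  have hmain := Stmt11.main f c T m PUnit (fun _ => (Set.univ : Set V))
    (fun i l h => absurd (Subsingleton.elim i l) h) hω
  rcases hmain with h | h
  · exact absurd h hno
  right; left
  obtain ⟨e⟩ : Nonempty (W ≃ Fin m) := ⟨Fintype.equivFinOfCardEq hcard⟩
  set P : Tournament (Fin m) :=
    ⟨fun a b => Q.arc (e.symm a) (e.symm b),
     fun a h => Q.loopless _ h,
     fun a b hne => Q.anti _ _ (fun hh => hne (e.symm.injective hh))⟩ with hPdef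
  obtain ⟨φ, hinj, hmem, harc⟩ := h P (fun _ => PUnit.unit)
  refine ⟨fun w => φ (e w), fun a b hab => e.injective (hinj hab), ?_⟩
  intro u v
  constructor
  · intro h
    have hP : P.arc (e u) (e v) := by
      simp only [hPdef, Equiv.symm_apply_apply]
      exact h
    exact harc _ _ hP
  · intro h
    by_contra hq
    have hne : u ≠ v := by
      rintro rfl
      exact T.loopless _ h
    have hvu : Q.arc v u := (Q.anti v u hne.symm).2 (fun hh => hq hh)
    have hP : P.arc (e v) (e u) := by
      simp only [hPdef, Equiv.symm_apply_apply]
      exact hvu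
    have h2 : T.arc (φ (e v)) (φ (e u)) := harc _ _ hP
    have hne2 : φ (e u) ≠ φ (e v) := fun hh => hne (e.injective (hinj hh))
    exact ((T.anti _ _ hne2).1 h) h2
end

section
/- Let n ≥ 2 and let g : ℕ → ℕ be any function such that for every b ∈ ℕ and every tournament with clique number at least g(b) there is a vertex whose out-neighbourhood has clique number at least b and a vertex whose in-neighbourhood has clique number at least b. Let T be a tournament and c an integer such that every subtournament T' of T with ω⃗(T') ≥ c contains a copy of D_{n−1}. Let c_small ≥ c and c_large be integers, and let A, B be disjoint subsets of V(T) such that ω⃗(A) ≥ c_large, ω⃗(B) ≥ c_large + g((1 + |V(D_{n−1})|)·c_small), and for each v ∈ A, ω⃗(N^−(v) ∩ B) < c_small. Then either T contains D_n as a subtournament, or there exists B₂ ⊆ B with ω⃗(B₂) ≥ c_large such that for each w ∈ B₂, ω⃗(N^+(w) ∩ A) < c. -/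
section Helpers

open Tournament

attribute [local instance] Classical.propDecidable

namespace Tournament

variable {V W : Type}

lemma cliqueNum_le_backedge (T : Tournament V) {f : V → ℕ} (hf : Function.Injective f) :
    T.cliqueNum ≤ (T.backedge f).cliqueNum :=
  Nat.sInf_le ⟨f, hf, rfl⟩

lemma exists_ordering (T : Tournament V) [Fintype V] :
    ∃ f : V → ℕ, Function.Injective f ∧ (T.backedge f).cliqueNum = T.cliqueNum := by
  have hne : {n | ∃ f : V → ℕ, Function.Injective f ∧ (T.backedge f).cliqueNum = n}.Nonempty :=
    ⟨_, fun v => ((Fintype.equivFin V) v : ℕ),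
      fun a b h => (Fintype.equivFin V).injective (Fin.val_injective h), rfl⟩
  exact Nat.sInf_mem hne

lemma cliqueNum_le_of_embed [Fintype V] [Fintype W] (H : Tournament W) (T : Tournament V)
    (φ : W → V) (hφ : Function.Injective φ)
    (harc : ∀ u v, H.arc u v ↔ T.arc (φ u) (φ v)) :
    H.cliqueNum ≤ T.cliqueNum := by
  obtain ⟨f, hf, hfe⟩ := T.exists_ordering
  rw [← hfe]
  refine le_trans (H.cliqueNum_le_backedge (hf.comp hφ)) ?_
  obtain ⟨s, hs⟩ := (H.backedge (f ∘ φ)).exists_isNClique_cliqueNum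
  have hcl : (T.backedge f).IsClique (s.image φ) := by
    intro a ha b hb hab
    simp only [Finset.coe_image, Set.mem_image, Finset.mem_coe] at ha hb
    obtain ⟨a', ha', rfl⟩ := ha
    obtain ⟨b', hb', rfl⟩ := hb
    have hne : a' ≠ b' := fun e => hab (by rw [e])
    have hadj := hs.1 ha' hb' hne
    rcases (hadj : _ ∨ _) with ⟨h1, h2⟩ | ⟨h1, h2⟩
    · exact Or.inl ⟨h1, (harc _ _).1 h2⟩
    · exact Or.inr ⟨h1, (harc _ _).1 h2⟩
  calc (H.backedge (f ∘ φ)).cliqueNum = s.card := hs.2.symm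
    _ = (s.image φ).card := (Finset.card_image_of_injective s hφ).symm
    _ ≤ (T.backedge f).cliqueNum := SimpleGraph.IsClique.card_le_cliqueNum (tc := hcl)

lemma cliqueNumOn_mono [Fintype V] (T : Tournament V) {X Y : Set V} (h : X ⊆ Y) :
    T.cliqueNumOn X ≤ T.cliqueNumOn Y :=
  cliqueNum_le_of_embed _ _ (Set.inclusion h) (Set.inclusion_injective h)
    (fun _ _ => Iff.rfl)

lemma cliqueNumOn_empty [Fintype V] (T : Tournament V) : T.cliqueNumOn (∅ : Set V) = 0 := by
  obtain ⟨f, hf, hfe⟩ := (T.restrict ∅).exists_ordering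
  obtain ⟨s, hs⟩ := ((T.restrict ∅).backedge f).exists_isNClique_cliqueNum
  have hse : s = ∅ := Finset.eq_empty_of_forall_notMem
    (fun x _ => absurd x.2 (Set.notMem_empty _))
  have : ((T.restrict ∅).backedge f).cliqueNum = 0 := by
    rw [← hs.2, hse, Finset.card_empty]
  rw [Tournament.cliqueNumOn, ← hfe, this]

lemma one_le_cliqueNumOn [Fintype V] (T : Tournament V) {S : Set V} (hS : S.Nonempty) :
    1 ≤ T.cliqueNumOn S := by
  obtain ⟨f, hf, hfe⟩ := (T.restrict S).exists_ordering
  obtain ⟨v, hv⟩ := hS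
  have hcl : ((T.restrict S).backedge f).IsClique ({⟨v, hv⟩} : Finset S) := by
    simp [SimpleGraph.IsClique]
  rw [Tournament.cliqueNumOn, ← hfe]
  calc (1 : ℕ) = ({⟨v, hv⟩} : Finset S).card := by simp
    _ ≤ _ := SimpleGraph.IsClique.card_le_cliqueNum (tc := hcl)

lemma cliqueNumOn_union_le [Fintype V] (T : Tournament V) (X Y : Set V) :
    T.cliqueNumOn (X ∪ Y) ≤ T.cliqueNumOn X + T.cliqueNumOn Y := by
  set Z := Y \ X with hZ
  have hXZ : X ∪ Y = X ∪ Z := (Set.union_diff_self).symm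
  rw [hXZ]
  have hZY : T.cliqueNumOn Z ≤ T.cliqueNumOn Y := T.cliqueNumOn_mono Set.diff_subset
  refine le_trans ?_ (Nat.add_le_add_left hZY _)
  -- now show cliqueNumOn (X ∪ Z) ≤ cliqueNumOn X + cliqueNumOn Z
  obtain ⟨fX, hfX, hfXe⟩ := (T.restrict X).exists_ordering
  obtain ⟨fZ, hfZ, hfZe⟩ := (T.restrict Z).exists_ordering
  set N : ℕ := (Finset.univ.sup fun x : X => fX x) + 1 with hN
  have hfXN : ∀ x : X, fX x < N := fun x =>
    Nat.lt_succ_of_le (Finset.le_sup (Finset.mem_univ x))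
  have hmem : ∀ z : ↥(X ∪ Z), z.1 ∉ X → z.1 ∈ Z := fun z h => z.2.resolve_left h
  set f : ↥(X ∪ Z) → ℕ := fun z =>
    if h : z.1 ∈ X then fX ⟨z.1, h⟩ else N + fZ ⟨z.1, hmem z h⟩ with hfdef
  have hfinj : Function.Injective f := by
    intro a b hab
    simp only [hfdef] at hab
    by_cases ha : a.1 ∈ X <;> by_cases hb : b.1 ∈ X
    · rw [dif_pos ha, dif_pos hb] at hab
      have h2 := hfX hab
      simp only [Subtype.mk.injEq] at h2
      exact Subtype.ext h2
    · rw [dif_pos ha, dif_neg hb] at hab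
      exact absurd hab (by have := hfXN ⟨a.1, ha⟩; omega)
    · rw [dif_neg ha, dif_pos hb] at hab
      exact absurd hab.symm (by have := hfXN ⟨b.1, hb⟩; omega)
    · rw [dif_neg ha, dif_neg hb] at hab
      have : fZ ⟨a.1, hmem a ha⟩ = fZ ⟨b.1, hmem b hb⟩ := by omega
      have h2 := hfZ this
      simp only [Subtype.mk.injEq] at h2
      exact Subtype.ext h2

  refine le_trans ((T.restrict (X ∪ Z)).cliqueNum_le_backedge hfinj) ?_
  obtain ⟨s, hs⟩ := ((T.restrict (X ∪ Z)).backedge f).exists_isNClique_cliqueNum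
  rw [← hs.2]
  set s1 := s.filter (fun z => z.1 ∈ X) with hs1
  set s2 := s.filter (fun z => ¬ z.1 ∈ X) with hs2
  have hcard : s1.card + s2.card = s.card := Finset.card_filter_add_card_filter_not _
  have hb1 : s1.card ≤ T.cliqueNumOn X := by
    set ψ : {z // z ∈ s1} → X := fun z =>
      ⟨z.1.1, (Finset.mem_filter.mp z.2).2⟩ with hψ
    have hψinj : Function.Injective ψ := by
      intro a b h
      simp only [hψ, Subtype.mk.injEq] at h
      exact Subtype.ext (Subtype.ext h)
    have hcl : ((T.restrict X).backedge fX).IsClique (s1.attach.image ψ) := by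
      intro a ha b hb hab
      simp only [Finset.coe_image, Set.mem_image, Finset.mem_coe, Finset.mem_attach] at ha hb
      obtain ⟨a', -, rfl⟩ := ha
      obtain ⟨b', -, rfl⟩ := hb
      have hne : a'.1 ≠ b'.1 := by
        intro e; exact hab (by simp [hψ, e])
      have hadj := hs.1 (Finset.mem_coe.mpr (Finset.mem_of_mem_filter _ a'.2))
        (Finset.mem_coe.mpr (Finset.mem_of_mem_filter _ b'.2)) hne
      have hfa : f a'.1 = fX (ψ a') := by
        simp only [hfdef]; rw [dif_pos (Finset.mem_filter.mp a'.2).2]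
      have hfb : f b'.1 = fX (ψ b') := by
        simp only [hfdef]; rw [dif_pos (Finset.mem_filter.mp b'.2).2]
      rcases (hadj : _ ∨ _) with ⟨h1, h2⟩ | ⟨h1, h2⟩
      · exact Or.inl ⟨by rw [← hfa, ← hfb]; exact h1, h2⟩
      · exact Or.inr ⟨by rw [← hfa, ← hfb]; exact h1, h2⟩
    have : s1.card = (s1.attach.image ψ).card := by
      rw [Finset.card_image_of_injective _ hψinj, Finset.card_attach]
    rw [this, Tournament.cliqueNumOn, ← hfXe]
    exact SimpleGraph.IsClique.card_le_cliqueNum (tc := hcl)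
  have hb2 : s2.card ≤ T.cliqueNumOn Z := by
    set ψ : {z // z ∈ s2} → Z := fun z =>
      ⟨z.1.1, hmem z.1 (Finset.mem_filter.mp z.2).2⟩ with hψ
    have hψinj : Function.Injective ψ := by
      intro a b h
      simp only [hψ, Subtype.mk.injEq] at h
      exact Subtype.ext (Subtype.ext h)
    have hcl : ((T.restrict Z).backedge fZ).IsClique (s2.attach.image ψ) := by
      intro a ha b hb hab
      simp only [Finset.coe_image, Set.mem_image, Finset.mem_coe, Finset.mem_attach] at ha hb
      obtain ⟨a', -, rfl⟩ := ha
      obtain ⟨b', -, rfl⟩ := hb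
      have hne : a'.1 ≠ b'.1 := by
        intro e; exact hab (by simp [hψ, e])
      have hadj := hs.1 (Finset.mem_coe.mpr (Finset.mem_of_mem_filter _ a'.2))
        (Finset.mem_coe.mpr (Finset.mem_of_mem_filter _ b'.2)) hne
      have hfa : f a'.1 = N + fZ (ψ a') := by
        simp only [hfdef]; rw [dif_neg (Finset.mem_filter.mp a'.2).2]
      have hfb : f b'.1 = N + fZ (ψ b') := by
        simp only [hfdef]; rw [dif_neg (Finset.mem_filter.mp b'.2).2]
      rcases (hadj : _ ∨ _) with ⟨h1, h2⟩ | ⟨h1, h2⟩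
      · exact Or.inl ⟨by rw [hfa, hfb] at h1; omega, h2⟩
      · exact Or.inr ⟨by rw [hfa, hfb] at h1; omega, h2⟩
    have : s2.card = (s2.attach.image ψ).card := by
      rw [Finset.card_image_of_injective _ hψinj, Finset.card_attach]
    rw [this, Tournament.cliqueNumOn, ← hfZe]
    exact SimpleGraph.IsClique.card_le_cliqueNum (tc := hcl)
  omega

end Tournament

end Helpers
section Helpers2

attribute [local instance] Classical.propDecidable

namespace Tournament

variable {V W : Type}

lemma cliqueNumOn_image_val [Fintype V] (T : Tournament V) (B : Set V) (S : Set ↥B) :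
    T.cliqueNumOn (Subtype.val '' S) = (T.restrict B).cliqueNumOn S := by
  refine le_antisymm ?_ ?_
  · refine cliqueNum_le_of_embed _ _ (fun y => (⟨⟨y.1, ?_⟩, ?_⟩ : S)) ?_ ?_
    · obtain ⟨a, -, hav⟩ := y.2
      exact hav ▸ a.2
    · obtain ⟨a, ha, hav⟩ := y.2
      exact (show (a : ↥B) = ⟨y.1, _⟩ from Subtype.ext hav) ▸ ha
    · intro a b h
      have h2 := congrArg (fun z : S => (z.1 : V)) h
      exact Subtype.ext h2
    · intro u v
      exact Iff.rfl
  · refine cliqueNum_le_of_embed _ _ (fun x => (⟨x.1.1, ⟨x.1, x.2, rfl⟩⟩ : ↥(Subtype.val '' S))) ?_ ?_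
    · intro a b h
      have h2 := congrArg Subtype.val h
      exact Subtype.ext (Subtype.ext h2)
    · intro u v
      exact Iff.rfl

lemma cliqueNumOn_biUnion_le [Fintype V] {ι : Type} (T : Tournament V) (s : Finset ι)
    (F : ι → Set V) (k : ℕ) (hk : ∀ i ∈ s, T.cliqueNumOn (F i) ≤ k) :
    T.cliqueNumOn (⋃ i ∈ s, F i) ≤ s.card * k := by
  classical
  induction s using Finset.induction_on with
  | empty => simp [cliqueNumOn_empty]
  | @insert a s ha ih =>
    rw [Finset.set_biUnion_insert]
    refine le_trans (T.cliqueNumOn_union_le _ _) ?_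
    have h1 : T.cliqueNumOn (F a) ≤ k := hk a (Finset.mem_insert_self a s)
    have h2 := ih (fun i hi => hk i (Finset.mem_insert_of_mem hi))
    rw [Finset.card_insert_of_notMem ha]
    calc T.cliqueNumOn (F a) + T.cliqueNumOn (⋃ i ∈ s, F i) ≤ k + s.card * k := by omega
      _ = (s.card + 1) * k := by ring

lemma cliqueNumOn_iUnion_le [Fintype V] {ι : Type} [Fintype ι] (T : Tournament V)
    (F : ι → Set V) (k : ℕ) (hk : ∀ i, T.cliqueNumOn (F i) ≤ k) :
    T.cliqueNumOn (⋃ i, F i) ≤ Fintype.card ι * k := by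
  have h : (⋃ i, F i) = ⋃ i ∈ (Finset.univ : Finset ι), F i := by simp
  rw [h, ← Finset.card_univ]
  exact T.cliqueNumOn_biUnion_le Finset.univ F k (fun i _ => hk i)

lemma hasCopy_of_restrict {S : Set V} {T : Tournament V} {H : Tournament W}
    (h : (T.restrict S).HasCopy H) : T.HasCopy H := by
  obtain ⟨f, hf, harc⟩ := h
  exact ⟨fun w => (f w).1, fun a b hab => hf (Subtype.ext hab), harc⟩

end Tournament

instance instFintypeDType : ∀ n, Fintype (DType n)
  | 0 => inferInstanceAs (Fintype Empty)
  | n+1 =>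
    letI := instFintypeDType n
    inferInstanceAs (Fintype ((DType n) ⊕ ((DType n) ⊕ Unit)))

end Helpers2
open Tournament in
/-- Lemma (turning a half-bag-chain into a bag-chain). -/
theorem stmt_12 {V : Type} [Fintype V] (n : ℕ) (hn : 2 ≤ n) (g : ℕ → ℕ)
    (hg : ∀ b : ℕ, ∀ (W : Type) [Fintype W] (T' : Tournament W), g b ≤ T'.cliqueNum →
      (∃ v : W, b ≤ T'.cliqueNumOn (T'.outN v)) ∧
      (∃ w : W, b ≤ T'.cliqueNumOn (T'.inN w)))
    (T : Tournament V) (c : ℕ)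
    (hsub : ∀ X : Set V, c ≤ T.cliqueNumOn X → (T.restrict X).HasCopy (Dtour (n - 1)))
    (csmall clarge : ℕ) (hcs : c ≤ csmall)
    (A B : Set V) (hAB : Disjoint A B)
    (hA : clarge ≤ T.cliqueNumOn A)
    (hB : clarge + g ((1 + Nat.card (DType (n - 1))) * csmall) ≤ T.cliqueNumOn B)
    (hback : ∀ v ∈ A, T.cliqueNumOn (T.inN v ∩ B) < csmall) :
    T.HasCopy (Dtour n) ∨
      ∃ B₂ ⊆ B, clarge ≤ T.cliqueNumOn B₂ ∧
        ∀ w ∈ B₂, T.cliqueNumOn (T.outN w ∩ A) < c := by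
  classical
  obtain ⟨m, rfl⟩ : ∃ m, n = m + 1 := ⟨n - 1, by omega⟩
  simp only [Nat.add_sub_cancel] at hsub hB
  set b := (1 + Nat.card (DType m)) * csmall with hbdef
  set B₂ : Set V := {w ∈ B | T.cliqueNumOn (T.outN w ∩ A) < c} with hB₂def
  have hB₂B : B₂ ⊆ B := fun w hw => hw.1
  by_cases hcase : clarge ≤ T.cliqueNumOn B₂
  · exact Or.inr ⟨B₂, hB₂B, hcase, fun w hw => hw.2⟩
  left
  set B₁ : Set V := B \ B₂ with hB₁def
  have hB₁B : B₁ ⊆ B := Set.diff_subset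
  have hBu : B₂ ∪ B₁ = B := Set.union_diff_cancel hB₂B
  have hgb : g b ≤ T.cliqueNumOn B₁ := by
    have h1 := T.cliqueNumOn_union_le B₂ B₁
    rw [hBu] at h1
    omega
  obtain ⟨w, hw⟩ := (hg b ↥B₁ (T.restrict B₁) hgb).2
  have him : Subtype.val '' ((T.restrict B₁).inN w) = T.inN w.1 ∩ B₁ := by
    ext y
    simp only [Set.mem_image, Set.mem_inter_iff, Tournament.inN, Tournament.restrict,
      Set.mem_setOf_eq]
    constructor
    · rintro ⟨u, hu, rfl⟩
      exact ⟨hu, u.2⟩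
    · rintro ⟨hy, hyB⟩
      exact ⟨⟨y, hyB⟩, hy, rfl⟩
  have hSw : b ≤ T.cliqueNumOn (T.inN w.1 ∩ B₁) := by
    rw [← him, T.cliqueNumOn_image_val]
    exact hw
  have hwB₁ : w.1 ∈ B₁ := w.2
  have hwB : w.1 ∈ B := hB₁B hwB₁
  have hwA : c ≤ T.cliqueNumOn (T.outN w.1 ∩ A) := by
    have h2 := hwB₁.2
    by_contra hlt
    exact h2 ⟨hwB, by omega⟩
  obtain ⟨f₁, hf₁inj, hf₁arc⟩ := hsub (T.outN w.1 ∩ A) hwA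
  set Sw : Set V := T.inN w.1 ∩ B₁ with hSwdef
  set U : Set V := ⋃ d : DType m, T.inN (f₁ d).1 with hUdef
  have hbad : T.cliqueNumOn (Sw ∩ U) ≤ Nat.card (DType m) * csmall := by
    rw [Nat.card_eq_fintype_card]
    have hrw : Sw ∩ U = ⋃ d : DType m, (Sw ∩ T.inN (f₁ d).1) := by
      rw [hUdef, Set.inter_iUnion]
    rw [hrw]
    refine T.cliqueNumOn_iUnion_le _ csmall (fun d => ?_)
    have hsub2 : Sw ∩ T.inN (f₁ d).1 ⊆ T.inN (f₁ d).1 ∩ B := fun y hy =>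
      ⟨hy.2, hB₁B hy.1.2⟩
    exact le_trans (T.cliqueNumOn_mono hsub2) (le_of_lt (hback _ (f₁ d).2.2))
  have hgood : c ≤ T.cliqueNumOn (Sw \ U) := by
    have hsplit : Sw ∩ U ∪ Sw \ U = Sw := Set.inter_union_diff Sw U
    have h3 := T.cliqueNumOn_union_le (Sw ∩ U) (Sw \ U)
    rw [hsplit] at h3
    have hb' : b = csmall + Nat.card (DType m) * csmall := by rw [hbdef]; ring
    omega
  obtain ⟨f₂, hf₂inj, hf₂arc⟩ := hsub (Sw \ U) hgood
  -- basic facts about the vertices of the two copies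
  have hX1 : ∀ d, T.arc w.1 (f₁ d).1 := fun d => (f₁ d).2.1
  have hXA : ∀ d, (f₁ d).1 ∈ A := fun d => (f₁ d).2.2
  have hY1 : ∀ e, T.arc (f₂ e).1 w.1 := fun e => (f₂ e).2.1.1
  have hYB : ∀ e, (f₂ e).1 ∈ B := fun e => hB₁B (f₂ e).2.1.2
  have hwnA : w.1 ∉ A := fun h => Set.disjoint_left.mp hAB h hwB
  have hXY : ∀ d e, T.arc (f₁ d).1 (f₂ e).1 := by
    intro d e
    have h3 : (f₂ e).1 ∉ U := (f₂ e).2.2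
    have hnx : ¬ T.arc (f₂ e).1 (f₁ d).1 := fun hc => h3 (Set.mem_iUnion.mpr ⟨d, hc⟩)
    have hne : (f₁ d).1 ≠ (f₂ e).1 := by
      intro heq
      have hBmem : (f₁ d).1 ∈ B := by rw [heq]; exact hYB e
      exact Set.disjoint_left.mp hAB (hXA d) hBmem
    exact (T.anti _ _ hne).2 hnx
  have hXw : ∀ d, ¬ T.arc (f₁ d).1 w.1 := by
    intro d hc
    have hne : (f₁ d).1 ≠ w.1 := fun heq => hwnA (heq ▸ hXA d)
    exact ((T.anti _ _ hne.symm).1 (hX1 d)) hc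
  have hwY : ∀ e, ¬ T.arc w.1 (f₂ e).1 := by
    intro e hc
    have hne : (f₂ e).1 ≠ w.1 := fun heq => T.loopless w.1 (heq ▸ hY1 e)
    exact ((T.anti _ _ hne).1 (hY1 e)) hc
  have hYX : ∀ e d, ¬ T.arc (f₂ e).1 (f₁ d).1 := fun e d hc =>
    ((f₂ e).2.2) (Set.mem_iUnion.mpr ⟨d, hc⟩)
  -- the copy of D (m+1)
  refine ⟨fun z => match z with
    | Sum.inl d => (f₁ d).1
    | Sum.inr (Sum.inl e) => (f₂ e).1
    | Sum.inr (Sum.inr _) => w.1, ?_, ?_⟩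
  · -- injectivity
    intro z1 z2 h
    have hYne : ∀ e, (f₂ e).1 ≠ w.1 := fun e heq => T.loopless w.1 (heq ▸ hY1 e)
    have hXYne : ∀ d e, (f₁ d).1 ≠ (f₂ e).1 := fun d e heq =>
      Set.disjoint_left.mp hAB (hXA d) (heq ▸ hYB e)
    have hXwne : ∀ d, (f₁ d).1 ≠ w.1 := fun d heq => hwnA (heq ▸ hXA d)
    match z1, z2 with
    | Sum.inl d, Sum.inl d' =>
      have : d = d' := hf₁inj (Subtype.ext h)
      rw [this]
    | Sum.inl d, Sum.inr (Sum.inl e) => exact absurd h (hXYne d e)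
    | Sum.inl d, Sum.inr (Sum.inr u) => exact absurd h (hXwne d)
    | Sum.inr (Sum.inl e), Sum.inl d => exact absurd h.symm (hXYne d e)
    | Sum.inr (Sum.inl e), Sum.inr (Sum.inl e') =>
      have : e = e' := hf₂inj (Subtype.ext h)
      rw [this]
    | Sum.inr (Sum.inl e), Sum.inr (Sum.inr u) => exact absurd h (hYne e)
    | Sum.inr (Sum.inr u), Sum.inl d => exact absurd h.symm (hXwne d)
    | Sum.inr (Sum.inr u), Sum.inr (Sum.inl e) => exact absurd h.symm (hYne e)
    | Sum.inr (Sum.inr u), Sum.inr (Sum.inr u') => rfl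
  · -- arcs
    intro z1 z2
    match z1, z2 with
    | Sum.inl d, Sum.inl d' =>
      simpa [Dtour, Darc, Tournament.restrict] using hf₁arc d d'
    | Sum.inl d, Sum.inr (Sum.inl e) =>
      simp only [Dtour, Darc]
      exact iff_of_true trivial (hXY d e)
    | Sum.inl d, Sum.inr (Sum.inr u) =>
      simp only [Dtour, Darc]
      exact iff_of_false not_false (hXw d)
    | Sum.inr (Sum.inl e), Sum.inl d =>
      simp only [Dtour, Darc]
      exact iff_of_false not_false (hYX e d)
    | Sum.inr (Sum.inl e), Sum.inr (Sum.inl e') =>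
      simpa [Dtour, Darc, Tournament.restrict] using hf₂arc e e'
    | Sum.inr (Sum.inl e), Sum.inr (Sum.inr u) =>
      simp only [Dtour, Darc]
      exact iff_of_true trivial (hY1 e)
    | Sum.inr (Sum.inr u), Sum.inl d =>
      simp only [Dtour, Darc]
      exact iff_of_true trivial (hX1 d)
    | Sum.inr (Sum.inr u), Sum.inr (Sum.inl e) =>
      simp only [Dtour, Darc]
      exact iff_of_false not_false (hwY e)
    | Sum.inr (Sum.inr u), Sum.inr (Sum.inr u') =>
      simp only [Dtour, Darc]
      exact iff_of_false not_false (T.loopless w.1)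
end
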